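/- arXiv:0911.4759 — 4 statements merged into one kernel-verified Lean document; each statement's English description precedes it below -/
import Mathlib

section
/- Let w be a real-valued function on the punctured unit disk Δ* = {z ∈ ℂ : 0 < |z| < 1} that is C², subharmonic (Δw ≥ 0) and nonnegative on Δ*, extends continuously to {z : 0 < |z| ≤ 1} with w = 0 on the exterior boundary circle {|z| = 1}, and has finite Dirichlet energy ∫_{Δ*} |∇w|² < ∞. Then w ≡ 0 on Δ*. -/
open MeasureTheory Set Metric intervalIntegral Complex
open scoped Real Topology

/-- Partial derivative in the real direction of `w : ℂ → ℝ`. -/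
noncomputable def pdX (w : ℂ → ℝ) (z : ℂ) : ℝ := fderiv ℝ w z 1

/-- Partial derivative in the imaginary direction of `w : ℂ → ℝ`. -/
noncomputable def pdY (w : ℂ → ℝ) (z : ℂ) : ℝ := fderiv ℝ w z Complex.I

/-- The Euclidean Laplacian of `w : ℂ → ℝ`. -/
noncomputable def lap (w : ℂ → ℝ) (z : ℂ) : ℝ :=
  fderiv ℝ (fun ζ => fderiv ℝ w ζ 1) z 1
    + fderiv ℝ (fun ζ => fderiv ℝ w ζ Complex.I) z Complex.I

noncomputable section Stmt0Aux

def UU : Set ℂ := {z : ℂ | 0 < ‖z‖ ∧ ‖z‖ < 1}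

lemma isOpen_UU : IsOpen UU := by
  have h1 : IsOpen {z : ℂ | 0 < ‖z‖} :=
    isOpen_lt continuous_const continuous_norm
  have h2 : IsOpen {z : ℂ | ‖z‖ < 1} :=
    isOpen_lt continuous_norm continuous_const
  exact h1.inter h2

def cc (r θ : ℝ) : ℂ := (r : ℂ) * Complex.exp (θ * Complex.I)

lemma abs_cc (r θ : ℝ) : ‖cc r θ‖ = |r| := by
  simp [cc, Complex.norm_exp_ofReal_mul_I]

lemma cc_mem_UU {r : ℝ} (hr0 : 0 < r) (hr1 : r < 1) (θ : ℝ) : cc r θ ∈ UU := by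
  constructor <;> rw [abs_cc, abs_of_pos hr0] <;> assumption

lemma continuous_cc : Continuous fun p : ℝ × ℝ => cc p.1 p.2 := by
  apply Continuous.mul
  · exact Complex.continuous_ofReal.comp continuous_fst
  · exact Complex.continuous_exp.comp
      ((Complex.continuous_ofReal.comp continuous_snd).mul continuous_const)

lemma norm_exp_I (t : ℝ) : ‖Complex.exp (t * Complex.I)‖ = 1 := by
  rw [Complex.norm_exp_ofReal_mul_I]

lemma hasDerivAt_cc_r (r θ : ℝ) :
    HasDerivAt (fun ρ : ℝ => cc ρ θ) (Complex.exp (θ * Complex.I)) r := by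
  have h : HasDerivAt (fun ρ : ℝ => ρ • Complex.exp (θ * Complex.I))
      ((1:ℝ) • Complex.exp (θ * Complex.I)) r := (hasDerivAt_id r).smul_const _
  simpa [cc, Complex.real_smul] using h

lemma hasDerivAt_cc_theta (r θ : ℝ) :
    HasDerivAt (fun t : ℝ => cc r t) (cc r θ * Complex.I) θ := by
  have h1 : HasDerivAt (fun t : ℝ => (t : ℂ) * Complex.I) Complex.I θ := by
    have := (hasDerivAt_id θ).smul_const Complex.I
    simpa [Complex.real_smul] using this
  have h2 : HasDerivAt (fun t : ℝ => Complex.exp ((t : ℂ) * Complex.I))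
      (Complex.exp ((θ : ℂ) * Complex.I) * Complex.I) θ := by
    simpa using h1.cexp
  have := h2.const_mul (r : ℂ)
  simpa [cc, mul_assoc] using this

lemma cc_periodic (r : ℝ) : cc r π = cc r (-π) := by
  simp only [cc]
  congr 1
  rw [show ((-π : ℝ) : ℂ) = -(π : ℂ) by push_cast; ring, neg_mul, Complex.exp_neg,
    Complex.exp_pi_mul_I]
  norm_num

end Stmt0Aux

section Reg

variable {w : ℂ → ℝ}
  (hC2 : ContDiffOn ℝ 2 w {z : ℂ | 0 < ‖z‖ ∧ ‖z‖ < 1})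

/-- abbreviation for second derivative -/
noncomputable def D2 (w : ℂ → ℝ) (z : ℂ) : ℂ →L[ℝ] ℂ →L[ℝ] ℝ :=
  fderiv ℝ (fderiv ℝ w) z

include hC2

lemma hD1' : ContDiffOn ℝ 1 (fderiv ℝ w) UU :=
  hC2.fderiv_of_isOpen isOpen_UU (by norm_num)

lemma hDcont : ContinuousOn (fderiv ℝ w) UU :=
  hC2.continuousOn_fderiv_of_isOpen isOpen_UU (by norm_num)

lemma hD2cont : ContinuousOn (D2 w) UU :=
  (hD1' hC2).continuousOn_fderiv_of_isOpen isOpen_UU (by norm_num)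

lemma hw_deriv {z : ℂ} (hz : z ∈ UU) : HasFDerivAt w (fderiv ℝ w z) z := by
  have h := (hC2.contDiffAt (isOpen_UU.mem_nhds hz)).differentiableAt (by norm_num)
  exact h.hasFDerivAt

lemma hw_deriv2 {z : ℂ} (hz : z ∈ UU) : HasFDerivAt (fderiv ℝ w) (D2 w z) z := by
  have h := ((hD1' hC2).contDiffAt (isOpen_UU.mem_nhds hz)).differentiableAt (by norm_num)
  exact h.hasFDerivAt

lemma lap_eq {z : ℂ} (hz : z ∈ UU) :
    lap w z = D2 w z 1 1 + D2 w z Complex.I Complex.I := by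
  have h1 : ∀ v : ℂ, fderiv ℝ (fun ζ => fderiv ℝ w ζ v) z = (D2 w z).flip v := by
    intro v
    have := ((ContinuousLinearMap.apply ℝ ℝ v).hasFDerivAt.comp z (hw_deriv2 hC2 hz)).fderiv
    rw [show (fun ζ => fderiv ℝ w ζ v) = (ContinuousLinearMap.apply ℝ ℝ v) ∘ (fderiv ℝ w) from rfl,
      this]
    ext u
    rfl
  simp only [lap, h1]
  rfl

end Reg

section Pointwise

variable {w : ℂ → ℝ}
  (hC2 : ContDiffOn ℝ 2 w {z : ℂ | 0 < ‖z‖ ∧ ‖z‖ < 1})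

lemma L_rot (L : ℂ →L[ℝ] ℂ →L[ℝ] ℝ) (θ : ℝ) :
    L (Complex.exp (θ * Complex.I)) (Complex.exp (θ * Complex.I))
      + L (Complex.exp (θ * Complex.I) * Complex.I) (Complex.exp (θ * Complex.I) * Complex.I)
      = L 1 1 + L Complex.I Complex.I := by
  have hu : Complex.exp (θ * Complex.I)
      = (Real.cos θ) • (1:ℂ) + (Real.sin θ) • Complex.I := by
    rw [Complex.exp_mul_I]
    simp [Complex.real_smul, Complex.ofReal_cos, Complex.ofReal_sin]
  have huI : Complex.exp (θ * Complex.I) * Complex.I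
      = (-Real.sin θ) • (1:ℂ) + (Real.cos θ) • Complex.I := by
    rw [hu]
    simp [Complex.real_smul]
    ring_nf
    simp [Complex.I_sq]
    ring
  rw [huI, hu]
  simp only [map_add, _root_.map_smul, ContinuousLinearMap.add_apply,
    ContinuousLinearMap.smul_apply, smul_eq_mul]
  linear_combination (Real.sin_sq_add_cos_sq θ) * ((L 1) 1 + (L Complex.I) Complex.I)

include hC2

lemma hasDerivAt_k {r : ℝ} (hr0 : 0 < r) (hr1 : r < 1) (θ : ℝ) :
    HasDerivAt (fun t => fderiv ℝ w (cc r t) (cc r t * Complex.I))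
      (D2 w (cc r θ) (cc r θ * Complex.I) (cc r θ * Complex.I)
        - fderiv ℝ w (cc r θ) (cc r θ)) θ := by
  have hz := cc_mem_UU hr0 hr1 θ
  have hct := hasDerivAt_cc_theta r θ
  have hL : HasDerivAt (fun t => fderiv ℝ w (cc r t)) (D2 w (cc r θ) (cc r θ * Complex.I)) θ :=
    (hw_deriv2 hC2 hz).comp_hasDerivAt θ hct
  have hv : HasDerivAt (fun t => cc r t * Complex.I) (cc r θ * Complex.I * Complex.I) θ :=
    hct.mul_const _
  have h := hL.clm_apply hv
  refine h.congr_deriv ?_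
  rw [show cc r θ * Complex.I * Complex.I = -(cc r θ) by
    rw [mul_assoc, Complex.I_mul_I, mul_neg_one], map_neg]
  ring

lemma pointwise_id {r : ℝ} (hr0 : 0 < r) (hr1 : r < 1) (θ : ℝ) :
    fderiv ℝ w (cc r θ) (Complex.exp (θ * Complex.I))
      + r * (D2 w (cc r θ) (Complex.exp (θ * Complex.I)) (Complex.exp (θ * Complex.I)))
    = r * lap w (cc r θ)
      - (1/r) * (D2 w (cc r θ) (cc r θ * Complex.I) (cc r θ * Complex.I)
          - fderiv ℝ w (cc r θ) (cc r θ)) := by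
  have hz := cc_mem_UU hr0 hr1 θ
  have hrot := L_rot (D2 w (cc r θ)) θ
  have hz_eq : cc r θ = r • Complex.exp (θ * Complex.I) := by
    rw [cc, Complex.real_smul]
  have hzI : cc r θ * Complex.I = r • (Complex.exp (θ * Complex.I) * Complex.I) := by
    rw [hz_eq, smul_mul_assoc]
  have h1 : D2 w (cc r θ) (cc r θ * Complex.I) (cc r θ * Complex.I)
      = r * (r * D2 w (cc r θ) (Complex.exp (θ * Complex.I) * Complex.I)
          (Complex.exp (θ * Complex.I) * Complex.I)) := by
    rw [hzI]
    simp only [_root_.map_smul, ContinuousLinearMap.smul_apply, smul_eq_mul]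
  have h2 : fderiv ℝ w (cc r θ) (cc r θ)
      = r * fderiv ℝ w (cc r θ) (Complex.exp (θ * Complex.I)) := by
    rw [hz_eq]
    simp only [_root_.map_smul, ContinuousLinearMap.smul_apply, smul_eq_mul]
  rw [lap_eq hC2 hz, h1, h2, ← hrot]
  field_simp
  ring

end Pointwise

section DerivUnder

lemma annulus_compact {α β : ℝ} :
    IsCompact {z : ℂ | α ≤ ‖z‖ ∧ ‖z‖ ≤ β} := by
  have hc : IsClosed {z : ℂ | α ≤ ‖z‖ ∧ ‖z‖ ≤ β} :=
    (isClosed_le continuous_const continuous_norm).inter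
      (isClosed_le continuous_norm continuous_const)
  apply Metric.isCompact_of_isClosed_isBounded hc
  apply (Metric.isBounded_closedBall (x := (0:ℂ)) (r := β)).subset
  intro z hz
  simpa using hz.2

lemma deriv_under_integral {E : Type} [NormedAddCommGroup E] [NormedSpace ℝ E]
    {G : ℂ → E} {G' : ℂ → ℂ →L[ℝ] E} (T : ℝ → E →L[ℝ] ℝ)
    (hT : Continuous T) (hTnorm : ∀ t, ‖T t‖ ≤ 1)
    (hGc : ContinuousOn G UU) (hG'c : ContinuousOn G' UU)
    (hG : ∀ z ∈ UU, HasFDerivAt G (G' z) z)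
    {r : ℝ} (hr0 : 0 < r) (hr1 : r < 1) :
    HasDerivAt (fun ρ => ∫ t in (-π)..π, T t (G (cc ρ t)))
      (∫ t in (-π)..π, T t ((G' (cc r t)) (Complex.exp (t * Complex.I)))) r := by
  set δ := min r (1 - r) / 2 with hδ
  have hδpos : 0 < δ := by
    have := lt_min hr0 (by linarith : (0:ℝ) < 1 - r)
    positivity
  have hδr : δ ≤ r / 2 := by
    have := min_le_left r (1 - r); rw [hδ]; linarith
  have hδr' : δ ≤ (1 - r) / 2 := by
    have := min_le_right r (1 - r); rw [hδ]; linarith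
  have hball : ∀ ρ ∈ ball r δ, 0 < ρ ∧ ρ < 1 ∧ r - δ ≤ ρ ∧ ρ ≤ r + δ := by
    intro ρ hρ
    rw [mem_ball, Real.dist_eq, abs_lt] at hρ
    constructor
    · linarith
    constructor
    · linarith
    constructor <;> linarith
  set K : Set ℂ := {z : ℂ | r - δ ≤ ‖z‖ ∧ ‖z‖ ≤ r + δ} with hK
  have hKU : K ⊆ UU := by
    intro z hz
    constructor
    · have : (0:ℝ) < r - δ := by linarith
      linarith [hz.1]
    · have : r + δ < 1 := by linarith
      linarith [hz.2]
  obtain ⟨M, hM⟩ := annulus_compact.exists_bound_of_continuousOn (hG'c.mono hKU)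
  have hcmemK : ∀ ρ ∈ ball r δ, ∀ t : ℝ, cc ρ t ∈ K := by
    intro ρ hρ t
    obtain ⟨h1, h2, h3, h4⟩ := hball ρ hρ
    constructor <;> rw [abs_cc, abs_of_pos h1] <;> assumption
  have hcontt : ∀ ρ, 0 < ρ → ρ < 1 → Continuous fun t => T t (G (cc ρ t)) := by
    intro ρ h1 h2
    exact hT.clm_apply (hGc.comp_continuous
      (continuous_cc.comp (continuous_const.prodMk continuous_id))
      (fun t => cc_mem_UU h1 h2 t))
  have key := (intervalIntegral.hasDerivAt_integral_of_dominated_loc_of_deriv_le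
    (F := fun ρ t => T t (G (cc ρ t)))
    (F' := fun ρ t => T t ((G' (cc ρ t)) (Complex.exp (t * Complex.I))))
    (bound := fun _ => M) (μ := volume) (a := -π) (b := π) (x₀ := r) (ball_mem_nhds r hδpos)
    ?_ ?_ ?_ ?_ ?_ ?_)
  · exact key.2
  · filter_upwards [Ioo_mem_nhds hr0 hr1] with ρ hρ
    exact (hcontt ρ hρ.1 hρ.2).aestronglyMeasurable
  · exact (hcontt r hr0 hr1).intervalIntegrable _ _
  · apply Continuous.aestronglyMeasurable
    apply hT.clm_apply
    apply Continuous.clm_apply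
    · exact hG'c.comp_continuous
        (continuous_cc.comp (continuous_const.prodMk continuous_id))
        (fun t => cc_mem_UU hr0 hr1 t)
    · exact Complex.continuous_exp.comp
        ((Complex.continuous_ofReal.mul continuous_const))
  · apply Filter.Eventually.of_forall
    intro t _ ρ hρ
    calc ‖T t ((G' (cc ρ t)) (Complex.exp (t * Complex.I)))‖
        ≤ ‖T t‖ * ‖(G' (cc ρ t)) (Complex.exp (t * Complex.I))‖ :=
          (T t).le_opNorm _
      _ ≤ 1 * (‖G' (cc ρ t)‖ * ‖Complex.exp (t * Complex.I)‖) := by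
          apply mul_le_mul (hTnorm t) ((G' (cc ρ t)).le_opNorm _) (norm_nonneg _)
          norm_num
      _ ≤ M := by
          rw [norm_exp_I, one_mul, mul_one]
          exact hM _ (hcmemK ρ hρ t)
  · exact intervalIntegrable_const
  · apply Filter.Eventually.of_forall
    intro t _ ρ hρ
    obtain ⟨h1, h2, _, _⟩ := hball ρ hρ
    have hz := cc_mem_UU h1 h2 t
    exact ((T t).hasFDerivAt.comp_hasDerivAt ρ
      ((hG _ hz).comp_hasDerivAt ρ (hasDerivAt_cc_r ρ t)))

end DerivUnder

section CS

lemma interval_CS {f : ℝ → ℝ} (hf : Continuous f) {a b : ℝ} (hab : a ≤ b) :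
    (∫ t in a..b, f t) ^ 2 ≤ (b - a) * ∫ t in a..b, (f t) ^ 2 := by
  rcases eq_or_lt_of_le hab with h | h
  · subst h; simp
  set S := ∫ t in a..b, f t with hS
  have h0 : 0 ≤ ∫ t in a..b, ((b - a) * f t - S) ^ 2 := by
    apply intervalIntegral.integral_nonneg hab
    intro t _
    positivity
  have hexp : ∫ t in a..b, ((b - a) * f t - S) ^ 2
      = (b - a) ^ 2 * (∫ t in a..b, (f t) ^ 2) - 2 * (b - a) * S * S + (b - a) * S ^ 2 := by
    have h1 : ∀ t, ((b - a) * f t - S) ^ 2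
        = (b - a) ^ 2 * (f t) ^ 2 - (2 * (b - a) * S) * f t + S ^ 2 := by intro t; ring
    simp_rw [h1]
    rw [intervalIntegral.integral_add ((show Continuous fun t => (b - a) ^ 2 * (f t) ^ 2 - (2 * (b - a) * S) * f t from ((continuous_const.mul (hf.pow 2)).sub
        ((continuous_const.mul hf)))).intervalIntegrable _ _) (intervalIntegrable_const),
      intervalIntegral.integral_sub ((show Continuous fun t => (b - a) ^ 2 * (f t) ^ 2 from continuous_const.mul (hf.pow 2)).intervalIntegrable _ _)
        ((show Continuous fun t => (2 * (b - a) * S) * f t from continuous_const.mul hf).intervalIntegrable _ _),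
      intervalIntegral.integral_const_mul, intervalIntegral.integral_const_mul,
      intervalIntegral.integral_const, ← hS, smul_eq_mul]
  rw [hexp] at h0
  nlinarith [h0, sq_nonneg S]

end CS

section FluxIdent

variable {w : ℂ → ℝ}
  (hC2 : ContDiffOn ℝ 2 w {z : ℂ | 0 < ‖z‖ ∧ ‖z‖ < 1})

include hC2

lemma cont_integrand1 {r : ℝ} (hr0 : 0 < r) (hr1 : r < 1) :
    Continuous fun t => fderiv ℝ w (cc r t) (Complex.exp (t * Complex.I)) := by
  apply Continuous.clm_apply
  · exact (hDcont hC2).comp_continuous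
      (continuous_cc.comp (continuous_const.prodMk continuous_id))
      (fun t => cc_mem_UU hr0 hr1 t)
  · exact Complex.continuous_exp.comp (Complex.continuous_ofReal.mul continuous_const)

lemma cont_integrand2 {r : ℝ} (hr0 : 0 < r) (hr1 : r < 1) :
    Continuous fun t => D2 w (cc r t) (Complex.exp (t * Complex.I))
      (Complex.exp (t * Complex.I)) := by
  have he : Continuous fun t : ℝ => Complex.exp (t * Complex.I) :=
    Complex.continuous_exp.comp (Complex.continuous_ofReal.mul continuous_const)
  apply Continuous.clm_apply _ he
  apply Continuous.clm_apply _ he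
  exact (hD2cont hC2).comp_continuous
    (continuous_cc.comp (continuous_const.prodMk continuous_id))
    (fun t => cc_mem_UU hr0 hr1 t)

lemma cont_lap {r : ℝ} (hr0 : 0 < r) (hr1 : r < 1) :
    Continuous fun t => lap w (cc r t) := by
  have : ∀ t : ℝ, lap w (cc r t)
      = D2 w (cc r t) 1 1 + D2 w (cc r t) Complex.I Complex.I :=
    fun t => lap_eq hC2 (cc_mem_UU hr0 hr1 t)
  simp_rw [this]
  have hD2c : Continuous fun t : ℝ => D2 w (cc r t) :=
    (hD2cont hC2).comp_continuous
      (continuous_cc.comp (continuous_const.prodMk continuous_id))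
      (fun t => cc_mem_UU hr0 hr1 t)
  exact ((hD2c.clm_apply continuous_const).clm_apply continuous_const).add
    ((hD2c.clm_apply continuous_const).clm_apply continuous_const)

lemma cont_k' {r : ℝ} (hr0 : 0 < r) (hr1 : r < 1) :
    Continuous fun t => D2 w (cc r t) (cc r t * Complex.I) (cc r t * Complex.I)
      - fderiv ℝ w (cc r t) (cc r t) := by
  have hc : Continuous fun t : ℝ => cc r t :=
    continuous_cc.comp (continuous_const.prodMk continuous_id)
  have hD2c : Continuous fun t : ℝ => D2 w (cc r t) :=
    (hD2cont hC2).comp_continuous hc (fun t => cc_mem_UU hr0 hr1 t)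
  have hDc : Continuous fun t : ℝ => fderiv ℝ w (cc r t) :=
    (hDcont hC2).comp_continuous hc (fun t => cc_mem_UU hr0 hr1 t)
  exact ((hD2c.clm_apply (hc.mul continuous_const)).clm_apply
    (hc.mul continuous_const)).sub (hDc.clm_apply hc)

/-- integral of the θ-derivative of the periodic function k vanishes -/
lemma int_kprime {r : ℝ} (hr0 : 0 < r) (hr1 : r < 1) :
    ∫ t in (-π)..π, (D2 w (cc r t) (cc r t * Complex.I) (cc r t * Complex.I)
      - fderiv ℝ w (cc r t) (cc r t)) = 0 := by
  have h := intervalIntegral.integral_eq_sub_of_hasDerivAt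
    (f := fun t => fderiv ℝ w (cc r t) (cc r t * Complex.I)) (a := -π) (b := π)
    (fun t _ => hasDerivAt_k hC2 hr0 hr1 t)
    ((cont_k' hC2 hr0 hr1).intervalIntegrable _ _)
  rw [h]
  rw [cc_periodic, sub_self]

/-- The flux identity: φ r + r ψ r = r Λ r. -/
lemma flux_ident {r : ℝ} (hr0 : 0 < r) (hr1 : r < 1) :
    (∫ t in (-π)..π, fderiv ℝ w (cc r t) (Complex.exp (t * Complex.I)))
      + r * (∫ t in (-π)..π, D2 w (cc r t) (Complex.exp (t * Complex.I))
          (Complex.exp (t * Complex.I)))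
    = r * ∫ t in (-π)..π, lap w (cc r t) := by
  have h1 : (∫ t in (-π)..π, fderiv ℝ w (cc r t) (Complex.exp (t * Complex.I)))
      + r * (∫ t in (-π)..π, D2 w (cc r t) (Complex.exp (t * Complex.I))
          (Complex.exp (t * Complex.I)))
      = ∫ t in (-π)..π, (fderiv ℝ w (cc r t) (Complex.exp (t * Complex.I))
          + r * D2 w (cc r t) (Complex.exp (t * Complex.I)) (Complex.exp (t * Complex.I))) := by
    rw [intervalIntegral.integral_add ((cont_integrand1 hC2 hr0 hr1).intervalIntegrable _ _)
      ((show Continuous fun t => r * D2 w (cc r t) (Complex.exp (t * Complex.I)) (Complex.exp (t * Complex.I)) from continuous_const.mul (cont_integrand2 hC2 hr0 hr1)).intervalIntegrable _ _),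
      intervalIntegral.integral_const_mul]
  rw [h1]
  have h2 : ∀ t : ℝ, (fderiv ℝ w (cc r t) (Complex.exp (t * Complex.I))
      + r * D2 w (cc r t) (Complex.exp (t * Complex.I)) (Complex.exp (t * Complex.I)))
      = r * lap w (cc r t) - (1/r) * (D2 w (cc r t) (cc r t * Complex.I) (cc r t * Complex.I)
          - fderiv ℝ w (cc r t) (cc r t)) :=
    fun t => pointwise_id hC2 hr0 hr1 t
  simp_rw [h2]
  rw [intervalIntegral.integral_sub ((show Continuous fun t => r * lap w (cc r t) from continuous_const.mul
      (cont_lap hC2 hr0 hr1)).intervalIntegrable _ _)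
    ((show Continuous fun t => (1/r) * (D2 w (cc r t) (cc r t * Complex.I) (cc r t * Complex.I)
          - fderiv ℝ w (cc r t) (cc r t)) from continuous_const.mul (cont_k' hC2 hr0 hr1)).intervalIntegrable _ _),
    intervalIntegral.integral_const_mul, intervalIntegral.integral_const_mul,
    int_kprime hC2 hr0 hr1]
  ring

end FluxIdent

section Energy

lemma polar_symm_eq_cc (p : ℝ × ℝ) : Complex.polarCoord.symm p = cc p.1 p.2 := by
  rw [Complex.polarCoord_symm_apply, cc, Complex.exp_mul_I]
  push_cast
  ring

lemma measurableSet_ann (a b : ℝ) : MeasurableSet {z : ℂ | a < ‖z‖ ∧ ‖z‖ < b} := by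
  have : {z : ℂ | a < ‖z‖ ∧ ‖z‖ < b} = (fun z : ℂ => ‖z‖) ⁻¹' (Ioo a b) := rfl
  rw [this]
  exact measurableSet_Ioo.preimage continuous_norm.measurable

variable {w : ℂ → ℝ}
  (hC2 : ContDiffOn ℝ 2 w {z : ℂ | 0 < ‖z‖ ∧ ‖z‖ < 1})
  (henergy : IntegrableOn (fun z => pdX w z ^ 2 + pdY w z ^ 2)
      {z : ℂ | 0 < ‖z‖ ∧ ‖z‖ < 1})

include hC2

lemma g'_contOn : ContinuousOn (fun z => pdX w z ^ 2 + pdY w z ^ 2) UU := by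
  have h1 : ContinuousOn (fun z => pdX w z) UU :=
    (hDcont hC2).clm_apply continuousOn_const
  have h2 : ContinuousOn (fun z => pdY w z) UU :=
    (hDcont hC2).clm_apply continuousOn_const
  exact (h1.pow 2).add (h2.pow 2)

include henergy

lemma energy_lower {a b m : ℝ} (ha : 0 < a) (hab : a < b) (hb : b < 1) (hm0 : 0 ≤ m)
    (hm : ∀ r ∈ Ioo a b,
      m / r ≤ r * ∫ t in (-π)..π, (pdX w (cc r t) ^ 2 + pdY w (cc r t) ^ 2)) :
    m * (Real.log b - Real.log a)
      ≤ ∫ z in {z : ℂ | 0 < ‖z‖ ∧ ‖z‖ < 1},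
          (pdX w z ^ 2 + pdY w z ^ 2) := by
  set g' : ℂ → ℝ := fun z => pdX w z ^ 2 + pdY w z ^ 2 with hg'
  set H : ℝ × ℝ → ℝ := fun p => p.1 * g' (cc p.1 p.2) with hH
  set s : Set (ℝ × ℝ) := Ioo a b ×ˢ Ioo (-π) π with hs
  set ann : Set ℂ := {z : ℂ | a < ‖z‖ ∧ ‖z‖ < b} with hann
  have hannU : ann ⊆ UU := fun z hz => ⟨lt_trans ha hz.1, lt_trans hz.2 hb⟩
  -- Step A : integrability of H on s
  have hHcont : ContinuousOn H (Icc a b ×ˢ Icc (-π) π) := by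
    apply ContinuousOn.mul (continuous_fst.continuousOn)
    apply ((g'_contOn hC2).comp continuous_cc.continuousOn)
    intro p hp
    have h1 : a ≤ p.1 := hp.1.1
    have h2 : p.1 ≤ b := hp.1.2
    constructor <;> rw [abs_cc, abs_of_pos (lt_of_lt_of_le ha h1)] <;> [linarith; linarith]
  have hHint : IntegrableOn H s := by
    apply (hHcont.integrableOn_compact ((isCompact_Icc).prod isCompact_Icc)).mono_set
    exact Set.prod_mono Ioo_subset_Icc_self Ioo_subset_Icc_self
  -- Step B/C : Fubini
  have hHint' : Integrable H ((volume.restrict (Ioo a b)).prod (volume.restrict (Ioo (-π) π))) := by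
    rwa [Measure.prod_restrict, ← Measure.volume_eq_prod]
  have hfub : ∫ p in s, H p
      = ∫ r in Ioo a b, (∫ t in Ioo (-π) π, H (r, t)) := by
    rw [hs, show (volume : Measure (ℝ × ℝ)).restrict (Ioo a b ×ˢ Ioo (-π) π)
        = ((volume.restrict (Ioo a b)).prod (volume.restrict (Ioo (-π) π))) by
      rw [Measure.prod_restrict, ← Measure.volume_eq_prod]]
    exact MeasureTheory.integral_prod H hHint'
  have hinner : ∀ r : ℝ, (∫ t in Ioo (-π) π, H (r, t))
      = r * ∫ t in (-π)..π, g' (cc r t) := by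
    intro r
    rw [intervalIntegral.integral_of_le (by linarith [Real.pi_pos] : -π ≤ π),
      integral_Ioc_eq_integral_Ioo, ← MeasureTheory.integral_const_mul]
  -- Step F : polar change of variables
  have hker : ∫ p in s, H p = ∫ z in ann, g' z := by
    have hcv := Complex.integral_comp_polarCoord_symm (ann.indicator g')
    have hL : (∫ p in polarCoord.target, p.1 • (ann.indicator g') (Complex.polarCoord.symm p))
        = ∫ p in s, H p := by
      have heq : ∀ p ∈ polarCoord.target,
          p.1 • (ann.indicator g') (Complex.polarCoord.symm p)
          = (Ioo a b ×ˢ (univ : Set ℝ)).indicator H p := by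
        intro p hp
        rw [polarCoord_target] at hp
        have hp1 : 0 < p.1 := hp.1
        rw [polar_symm_eq_cc]
        by_cases hmem : a < p.1 ∧ p.1 < b
        · rw [indicator_of_mem, indicator_of_mem, smul_eq_mul]
          · exact ⟨hmem, mem_univ _⟩
          · rw [hann]; constructor <;> rw [abs_cc, abs_of_pos hp1] <;> [exact hmem.1; exact hmem.2]
        · rw [indicator_of_notMem, indicator_of_notMem, smul_zero]
          · intro hc; exact hmem ⟨hc.1.1, hc.1.2⟩
          · intro hc; rw [hann, mem_setOf_eq, abs_cc, abs_of_pos hp1] at hc; exact hmem hc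
      have hIoi : Set.Ioi (0:ℝ) ∩ Ioo a b = Ioo a b :=
        Set.inter_eq_self_of_subset_right (fun x hx => lt_trans ha hx.1)
      rw [setIntegral_congr_fun polarCoord.open_target.measurableSet heq,
        setIntegral_indicator (measurableSet_Ioo.prod MeasurableSet.univ),
        polarCoord_target, Set.prod_inter_prod, Set.inter_univ, hIoi]
    rw [← hL, hcv, MeasureTheory.integral_indicator (measurableSet_ann a b)]
  -- Step G : monotonicity in the domain
  have hmono : ∫ z in ann, g' z ≤ ∫ z in UU, g' z := by
    apply setIntegral_mono_set henergy
    · exact Filter.Eventually.of_forall fun z => by positivity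
    · exact HasSubset.Subset.eventuallyLE hannU
  -- Step D : lower bound
  have hinv_int : IntegrableOn (fun r : ℝ => m / r) (Ioo a b) := by
    apply (ContinuousOn.integrableOn_compact isCompact_Icc _).mono_set Ioo_subset_Icc_self
    apply continuousOn_const.div continuousOn_id
    intro r hr
    have : 0 < r := lt_of_lt_of_le ha hr.1
    exact ne_of_gt this
  have hinner_int : IntegrableOn (fun r => ∫ t in Ioo (-π) π, H (r, t)) (Ioo a b) :=
    hHint'.integral_prod_left
  have hlow : ∫ r in Ioo a b, m / r ≤ ∫ r in Ioo a b, (∫ t in Ioo (-π) π, H (r, t)) := by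
    apply setIntegral_mono_on hinv_int hinner_int measurableSet_Ioo
    intro r hr
    rw [hinner r]
    exact hm r hr
  -- Step E : compute the log integral
  have hlog : ∫ r in Ioo a b, m / r = m * (Real.log b - Real.log a) := by
    rw [← integral_Ioc_eq_integral_Ioo, ← intervalIntegral.integral_of_le hab.le]
    have h0 : (0:ℝ) ∉ Set.uIcc a b := by
      rw [Set.uIcc_of_le hab.le]
      intro hc
      exact absurd hc.1 (not_le.mpr ha)
    simp_rw [div_eq_mul_inv, ← one_div]
    rw [intervalIntegral.integral_const_mul, integral_one_div h0,
      Real.log_div (ne_of_gt (lt_trans ha hab)) (ne_of_gt ha)]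
  calc m * (Real.log b - Real.log a) = ∫ r in Ioo a b, m / r := hlog.symm
    _ ≤ ∫ r in Ioo a b, (∫ t in Ioo (-π) π, H (r, t)) := hlow
    _ = ∫ p in s, H p := hfub.symm
    _ = ∫ z in ann, g' z := hker
    _ ≤ ∫ z in UU, g' z := hmono

end Energy

section Final

lemma dir_sq_le (L : ℂ →L[ℝ] ℝ) (θ : ℝ) :
    (L (Complex.exp (θ * Complex.I))) ^ 2 ≤ (L 1) ^ 2 + (L Complex.I) ^ 2 := by
  have hu : Complex.exp (θ * Complex.I)
      = (Real.cos θ) • (1:ℂ) + (Real.sin θ) • Complex.I := by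
    rw [Complex.exp_mul_I]
    simp [Complex.real_smul, Complex.ofReal_cos, Complex.ofReal_sin]
  rw [hu, map_add, _root_.map_smul, _root_.map_smul, smul_eq_mul, smul_eq_mul]
  nlinarith [sq_nonneg (Real.sin θ * L 1 - Real.cos θ * L Complex.I),
    Real.sin_sq_add_cos_sq θ, sq_nonneg (L 1), sq_nonneg (L Complex.I)]

variable {w : ℂ → ℝ}
  (hC2 : ContDiffOn ℝ 2 w {z : ℂ | 0 < ‖z‖ ∧ ‖z‖ < 1})

include hC2

lemma cont_g'cc {r : ℝ} (hr0 : 0 < r) (hr1 : r < 1) :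
    Continuous fun t => pdX w (cc r t) ^ 2 + pdY w (cc r t) ^ 2 := by
  have hDc : Continuous fun t : ℝ => fderiv ℝ w (cc r t) :=
    (hDcont hC2).comp_continuous
      (continuous_cc.comp (continuous_const.prodMk continuous_id))
      (fun t => cc_mem_UU hr0 hr1 t)
  exact ((hDc.clm_apply continuous_const).pow 2).add ((hDc.clm_apply continuous_const).pow 2)

lemma cont_wcc {r : ℝ} (hr0 : 0 < r) (hr1 : r < 1) :
    Continuous fun t => w (cc r t) :=
  hC2.continuousOn.comp_continuous
    (continuous_cc.comp (continuous_const.prodMk continuous_id))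
    (fun t => cc_mem_UU hr0 hr1 t)

omit hC2

lemma A_tendsto
    (hcont : ContinuousOn w {z : ℂ | 0 < ‖z‖ ∧ ‖z‖ ≤ 1})
    (hbdry : ∀ z : ℂ, ‖z‖ = 1 → w z = 0) :
    Filter.Tendsto (fun r => ∫ t in (-π)..π, w (cc r t)) (𝓝[<] (1:ℝ)) (𝓝 0) := by
  rw [Metric.tendsto_nhds]
  intro ε hε
  have hπ := Real.pi_pos
  set K : Set ℂ := {z : ℂ | 1/2 ≤ ‖z‖ ∧ ‖z‖ ≤ 1} with hK
  have hKsub : K ⊆ {z : ℂ | 0 < ‖z‖ ∧ ‖z‖ ≤ 1} :=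
    fun z hz => ⟨lt_of_lt_of_le (by norm_num) hz.1, hz.2⟩
  have huc := annulus_compact.uniformContinuousOn_of_continuous (hcont.mono hKsub)
  rw [Metric.uniformContinuousOn_iff] at huc
  set ε' := ε / (2*π+1) with hε'
  have hε'pos : 0 < ε' := by positivity
  obtain ⟨δ, hδpos, hδ⟩ := huc ε' hε'pos
  have hmem : (1:ℝ) ∈ Ioc (max (1/2) (1-δ)) 1 := by
    constructor
    · rw [max_lt_iff]; constructor <;> linarith
    · exact le_refl 1
  filter_upwards [Ioo_mem_nhdsLT_of_mem hmem] with r hr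
  have hr2 : 1/2 < r := lt_of_le_of_lt (le_max_left _ _) hr.1
  have hrδ : 1 - δ < r := lt_of_le_of_lt (le_max_right _ _) hr.1
  have hr1 : r < 1 := hr.2
  have hbound : ∀ t ∈ Set.uIoc (-π) π, ‖w (cc r t)‖ ≤ ε' := by
    intro t _
    have hmem1 : cc r t ∈ K := by
      constructor <;> rw [abs_cc, abs_of_pos (by linarith : (0:ℝ) < r)] <;> linarith
    have hmem2 : cc 1 t ∈ K := by
      constructor <;> rw [abs_cc] <;> norm_num
    have hdz : dist (cc r t) (cc 1 t) < δ := by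
      rw [Complex.dist_eq, show cc r t - cc 1 t = ((r:ℂ) - 1) * Complex.exp (t * Complex.I) by
        rw [cc, cc]; push_cast; ring]
      rw [norm_mul, Complex.norm_exp_ofReal_mul_I, mul_one,
        show ((r:ℂ) - 1) = ((r - 1 : ℝ) : ℂ) by push_cast; ring, Complex.norm_real, Real.norm_eq_abs,
        abs_of_neg (by linarith : r - 1 < 0)]
      linarith
    have hw1 : w (cc 1 t) = 0 := by
      apply hbdry
      rw [abs_cc]; norm_num
    have := hδ _ hmem1 _ hmem2 hdz
    rw [Real.dist_eq, hw1, sub_zero] at this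
    exact le_of_lt this
  have hnorm := intervalIntegral.norm_integral_le_of_norm_le_const hbound
  rw [Real.dist_eq, sub_zero]
  calc |∫ t in (-π)..π, w (cc r t)| ≤ ε' * |π - (-π)| := hnorm
    _ = ε' * (2*π) := by rw [abs_of_pos (by linarith : (0:ℝ) < π - (-π))]; ring
    _ < ε := by rw [hε']; rw [div_mul_eq_mul_div, div_lt_iff₀ (by linarith)]; nlinarith

end Final

/-- A nonnegative subharmonic function of finite energy on the punctured unit disk,
vanishing on the exterior boundary circle, is identically zero. -/
theorem statement0 (w : ℂ → ℝ)
    (hC2 : ContDiffOn ℝ 2 w {z : ℂ | 0 < ‖z‖ ∧ ‖z‖ < 1})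
    (hsub : ∀ z : ℂ, 0 < ‖z‖ → ‖z‖ < 1 → 0 ≤ lap w z)
    (hnonneg : ∀ z : ℂ, 0 < ‖z‖ → ‖z‖ < 1 → 0 ≤ w z)
    (hcont : ContinuousOn w {z : ℂ | 0 < ‖z‖ ∧ ‖z‖ ≤ 1})
    (hbdry : ∀ z : ℂ, ‖z‖ = 1 → w z = 0)
    (henergy : IntegrableOn (fun z => pdX w z ^ 2 + pdY w z ^ 2)
      {z : ℂ | 0 < ‖z‖ ∧ ‖z‖ < 1})
    (z : ℂ) (hz0 : 0 < ‖z‖) (hz1 : ‖z‖ < 1) :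
    w z = 0 := by
  have hπ := Real.pi_pos
  set φ : ℝ → ℝ := fun r => ∫ t in (-π)..π, fderiv ℝ w (cc r t) (Complex.exp (t * Complex.I))
    with hφdef
  set ψ : ℝ → ℝ := fun r => ∫ t in (-π)..π,
    D2 w (cc r t) (Complex.exp (t * Complex.I)) (Complex.exp (t * Complex.I)) with hψdef
  set A : ℝ → ℝ := fun r => ∫ t in (-π)..π, w (cc r t) with hAdef
  set B : ℝ → ℝ := fun r => r * φ r with hBdef
  -- derivative of A
  have hA' : ∀ r ∈ Ioo (0:ℝ) 1, HasDerivAt A (φ r) r := by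
    intro r hr
    have h := deriv_under_integral (E := ℝ) (T := fun _ => ContinuousLinearMap.id ℝ ℝ)
      continuous_const (fun t => le_of_eq (ContinuousLinearMap.norm_id))
      hC2.continuousOn (hDcont hC2) (fun ζ hζ => hw_deriv hC2 hζ) hr.1 hr.2
    simpa using h
  -- derivative of φ
  have hφ' : ∀ r ∈ Ioo (0:ℝ) 1, HasDerivAt φ (ψ r) r := by
    intro r hr
    have hTn : ∀ t : ℝ, ‖ContinuousLinearMap.apply ℝ ℝ (Complex.exp (t * Complex.I))‖ ≤ 1 := by
      intro t
      apply ContinuousLinearMap.opNorm_le_bound _ zero_le_one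
      intro L
      rw [one_mul, ContinuousLinearMap.apply_apply]
      calc ‖L (Complex.exp (t * Complex.I))‖ ≤ ‖L‖ * ‖Complex.exp (t * Complex.I)‖ :=
            L.le_opNorm _
        _ = ‖L‖ := by rw [norm_exp_I, mul_one]
    have hTc : Continuous fun t : ℝ => ContinuousLinearMap.apply ℝ ℝ
        (Complex.exp (t * Complex.I)) :=
      (ContinuousLinearMap.apply ℝ ℝ).continuous.comp
        (Complex.continuous_exp.comp (Complex.continuous_ofReal.mul continuous_const))
    have h := deriv_under_integral (E := ℂ →L[ℝ] ℝ)
      (T := fun t => ContinuousLinearMap.apply ℝ ℝ (Complex.exp (t * Complex.I)))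
      hTc hTn (hDcont hC2) (hD2cont hC2) (fun ζ hζ => hw_deriv2 hC2 hζ) hr.1 hr.2
    simpa [ContinuousLinearMap.apply_apply] using h
  -- derivative of B
  have hB' : ∀ r ∈ Ioo (0:ℝ) 1,
      HasDerivAt B (r * ∫ t in (-π)..π, lap w (cc r t)) r := by
    intro r hr
    have h2 : HasDerivAt B (φ r + r * ψ r) r := by
      have := (hasDerivAt_id r).mul (hφ' r hr)
      exact this.congr_deriv (by simp)
    have hval : φ r + r * ψ r = r * ∫ t in (-π)..π, lap w (cc r t) := by
      simp only [hφdef, hψdef]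
      exact flux_ident hC2 hr.1 hr.2
    rwa [hval] at h2
  have hΛnn : ∀ r ∈ Ioo (0:ℝ) 1, 0 ≤ r * ∫ t in (-π)..π, lap w (cc r t) := by
    intro r hr
    apply mul_nonneg (le_of_lt hr.1)
    apply intervalIntegral.integral_nonneg (by linarith)
    intro t _
    apply hsub <;> rw [abs_cc, abs_of_pos hr.1]
    · exact hr.1
    · exact hr.2
  -- B is monotone on (0,1)
  have hBmono : MonotoneOn B (Ioo (0:ℝ) 1) := by
    apply monotoneOn_of_deriv_nonneg (convex_Ioo 0 1)
    · exact fun r hr => (hB' r hr).continuousAt.continuousWithinAt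
    · intro r hr
      rw [interior_Ioo] at hr
      exact (hB' r hr).differentiableAt.differentiableWithinAt
    · intro r hr
      rw [interior_Ioo] at hr
      rw [(hB' r hr).deriv]
      exact hΛnn r hr
  -- B is nonnegative on (0,1) : else the energy integral diverges
  have hBnn : ∀ r ∈ Ioo (0:ℝ) 1, 0 ≤ B r := by
    by_contra hcon
    push_neg at hcon
    obtain ⟨r₀, hr₀, hneg⟩ := hcon
    set ε := -B r₀ with hεdef
    have hεpos : 0 < ε := by simp [hεdef]; linarith
    set Etot := ∫ ζ in {ζ : ℂ | 0 < ‖ζ‖ ∧ ‖ζ‖ < 1},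
      (pdX w ζ ^ 2 + pdY w ζ ^ 2) with hEdef
    set X := 2 * π * (|Etot| + 1) / ε ^ 2 with hXdef
    have hXpos : 0 < X := by
      rw [hXdef]
      exact div_pos (by positivity) (pow_pos hεpos 2)
    set a := r₀ * Real.exp (-X) with hadef
    have ha0 : 0 < a := by
      rw [hadef]; exact mul_pos hr₀.1 (Real.exp_pos _)
    have har : a < r₀ := by
      rw [hadef]
      have : Real.exp (-X) < 1 := Real.exp_lt_one_iff.mpr (by linarith)
      nlinarith [hr₀.1]
    have hm : ∀ r ∈ Ioo a r₀,
        ε ^ 2 / (2 * π) / r ≤ r * ∫ t in (-π)..π,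
          (pdX w (cc r t) ^ 2 + pdY w (cc r t) ^ 2) := by
      intro r hr
      have hrmem : r ∈ Ioo (0:ℝ) 1 := ⟨lt_trans ha0 hr.1, lt_trans hr.2 hr₀.2⟩
      have hBr : B r ≤ -ε := by
        have := hBmono hrmem hr₀ hr.2.le
        rw [hεdef]; linarith
      have hBrφ : r * φ r ≤ -ε := hBr
      have hCS : (φ r) ^ 2 ≤ (2 * π) * ∫ t in (-π)..π,
          (fderiv ℝ w (cc r t) (Complex.exp (t * Complex.I))) ^ 2 := by
        have h := interval_CS (cont_integrand1 hC2 hrmem.1 hrmem.2)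
          (by linarith : -π ≤ π)
        rw [show π - (-π) = 2 * π by ring] at h
        exact h
      have hpt : ∀ t : ℝ, (fderiv ℝ w (cc r t) (Complex.exp (t * Complex.I))) ^ 2
          ≤ pdX w (cc r t) ^ 2 + pdY w (cc r t) ^ 2 := fun t => dir_sq_le _ t
      have hle : (∫ t in (-π)..π, (fderiv ℝ w (cc r t) (Complex.exp (t * Complex.I))) ^ 2)
          ≤ ∫ t in (-π)..π, (pdX w (cc r t) ^ 2 + pdY w (cc r t) ^ 2) := by
        apply intervalIntegral.integral_mono_on (by linarith)
          (((cont_integrand1 hC2 hrmem.1 hrmem.2).pow 2).intervalIntegrable _ _)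
          ((cont_g'cc hC2 hrmem.1 hrmem.2).intervalIntegrable _ _)
        intro t _
        exact hpt t
      have hF2nn : 0 ≤ ∫ t in (-π)..π,
          (fderiv ℝ w (cc r t) (Complex.exp (t * Complex.I))) ^ 2 := by
        apply intervalIntegral.integral_nonneg (by linarith)
        intro t _; positivity
      have hε2 : ε ^ 2 ≤ (r * φ r) ^ 2 := by nlinarith
      rw [div_div, div_le_iff₀ (by nlinarith [hrmem.1] : (0:ℝ) < 2 * π * r)]
      nlinarith [mul_le_mul_of_nonneg_left hCS (sq_nonneg r),
        mul_le_mul_of_nonneg_left hle (by positivity : (0:ℝ) ≤ r ^ 2 * (2 * π))]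
    have hfinal := energy_lower hC2 henergy ha0 har hr₀.2 (by positivity) hm
    rw [hadef, Real.log_mul (ne_of_gt hr₀.1) (Real.exp_ne_zero _), Real.log_exp] at hfinal
    have : ε ^ 2 / (2 * π) * X = |Etot| + 1 := by
      rw [hXdef]; field_simp
    have hcontr : |Etot| + 1 ≤ Etot := by
      calc |Etot| + 1 = ε ^ 2 / (2 * π) * X := this.symm
        _ = ε ^ 2 / (2 * π) * (Real.log r₀ - (Real.log r₀ + -X)) := by ring
        _ ≤ Etot := hfinal
    linarith [le_abs_self Etot]
  -- φ nonnegative, hence A monotone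
  have hφnn : ∀ r ∈ Ioo (0:ℝ) 1, 0 ≤ φ r := by
    intro r hr
    have := hBnn r hr
    rw [hBdef] at this
    exact nonneg_of_mul_nonneg_right this hr.1
  have hAmono : MonotoneOn A (Ioo (0:ℝ) 1) := by
    apply monotoneOn_of_deriv_nonneg (convex_Ioo 0 1)
    · exact fun r hr => (hA' r hr).continuousAt.continuousWithinAt
    · intro r hr
      rw [interior_Ioo] at hr
      exact (hA' r hr).differentiableAt.differentiableWithinAt
    · intro r hr
      rw [interior_Ioo] at hr
      rw [(hA' r hr).deriv]
      exact hφnn r hr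
  -- A vanishes identically
  have hAzero : ∀ r ∈ Ioo (0:ℝ) 1, A r = 0 := by
    intro r hr
    have hge : 0 ≤ A r := by
      apply intervalIntegral.integral_nonneg (by linarith)
      intro t _
      apply hnonneg <;> rw [abs_cc, abs_of_pos hr.1]
      · exact hr.1
      · exact hr.2
    have hle : A r ≤ 0 := by
      have hev : ∀ᶠ s in 𝓝[<] (1:ℝ), A r ≤ A s := by
        filter_upwards [Ioo_mem_nhdsLT_of_mem
          (show (1:ℝ) ∈ Ioc r 1 from ⟨hr.2, le_refl 1⟩)] with s hs
        exact hAmono hr ⟨lt_trans hr.1 hs.1, hs.2⟩ hs.1.le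
      exact ge_of_tendsto (A_tendsto hcont hbdry) hev
    linarith
  -- pointwise vanishing on the circle of radius |z|
  set r := ‖z‖ with hrdef
  have hrmem : r ∈ Ioo (0:ℝ) 1 := ⟨hz0, hz1⟩
  have hq : ∀ t ∈ Icc (-π) π, w (cc r t) = 0 := by
    intro t₀ ht₀
    by_contra hne
    have hqnn : ∀ t : ℝ, 0 ≤ w (cc r t) := by
      intro t
      apply hnonneg <;> rw [abs_cc, abs_of_pos hrmem.1]
      · exact hrmem.1
      · exact hrmem.2
    have hqpos : 0 < w (cc r t₀) := lt_of_le_of_ne (hqnn t₀) (Ne.symm hne)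
    have hqc : Continuous fun t => w (cc r t) := cont_wcc hC2 hrmem.1 hrmem.2
    have hca := hqc.continuousAt (x := t₀)
    rw [Metric.continuousAt_iff] at hca
    obtain ⟨δ, hδpos, hδ⟩ := hca (w (cc r t₀) / 2) (by linarith)
    set α := max (-π) (t₀ - δ/2) with hα
    set β := min π (t₀ + δ/2) with hβ
    have hαβ : α < β := by
      rw [hα, hβ, max_lt_iff, lt_min_iff, lt_min_iff]
      refine ⟨⟨by linarith, by linarith [ht₀.1]⟩, ⟨by linarith [ht₀.2], by linarith⟩⟩
    have hqlow : ∀ t ∈ Icc α β, w (cc r t₀) / 2 ≤ w (cc r t) := by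
      intro t ht
      have h1 : t₀ - δ/2 ≤ t := le_trans (le_max_right _ _) ht.1
      have h2 : t ≤ t₀ + δ/2 := le_trans ht.2 (min_le_right _ _)
      have hdist : dist t t₀ < δ := by
        rw [Real.dist_eq, abs_lt]
        constructor <;> linarith
      have := hδ hdist
      rw [Real.dist_eq, abs_lt] at this
      linarith [this.1]
    have hsplit : A r = (∫ t in (-π)..α, w (cc r t)) + (∫ t in α..β, w (cc r t))
        + (∫ t in β..π, w (cc r t)) := by
      simp only [hAdef]
      rw [← intervalIntegral.integral_add_adjacent_intervals
        (hqc.intervalIntegrable (-π) α) (hqc.intervalIntegrable α π),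
        ← intervalIntegral.integral_add_adjacent_intervals
        (hqc.intervalIntegrable α β) (hqc.intervalIntegrable β π)]
      ring
    have h1nn : 0 ≤ ∫ t in (-π)..α, w (cc r t) :=
      intervalIntegral.integral_nonneg (le_max_left _ _) (fun t _ => hqnn t)
    have h3nn : 0 ≤ ∫ t in β..π, w (cc r t) :=
      intervalIntegral.integral_nonneg (min_le_left _ _) (fun t _ => hqnn t)
    have h2low : w (cc r t₀) / 2 * (β - α) ≤ ∫ t in α..β, w (cc r t) := by
      have := intervalIntegral.integral_mono_on (μ := volume) hαβ.le intervalIntegrable_const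
        (hqc.intervalIntegrable α β) hqlow
      rwa [intervalIntegral.integral_const, smul_eq_mul, mul_comm] at this
    have hA0 := hAzero r hrmem
    rw [hsplit] at hA0
    nlinarith [hqpos, hαβ]
  have harg : Complex.arg z ∈ Icc (-π) π :=
    ⟨(Complex.neg_pi_lt_arg z).le, Complex.arg_le_pi z⟩
  have := hq (Complex.arg z) harg
  rwa [show cc r (Complex.arg z) = z from Complex.norm_mul_exp_arg_mul_I z] at this
end

section
/- Let w : ℝ × [0,∞) → ℝ be continuous, 2π-periodic in the first variable x, nonnegative, C² on the open half-cylinder ℝ × (0,∞) with Δw = w_xx + w_yy ≥ 0 there, with w(x,0) = 0 for all x, and with finite Dirichlet energy ∫_{(0,2π)×(0,∞)} |∇w|² dx dy < ∞. Then w ≡ 0. -/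
open MeasureTheory Real

private lemma hasDerivAt_slice_x {u : ℝ × ℝ → ℝ} {p : ℝ × ℝ} (h : DifferentiableAt ℝ u p) :
    HasDerivAt (fun t => u (t, p.2)) (fderiv ℝ u p (1, 0)) p.1 := by
  have hline : HasDerivAt (fun t : ℝ => ((t, p.2) : ℝ × ℝ)) ((1 : ℝ), (0 : ℝ)) p.1 :=
    (hasDerivAt_id p.1).prodMk (hasDerivAt_const p.1 p.2)
  exact h.hasFDerivAt.comp_hasDerivAt p.1 hline

private lemma hasDerivAt_slice_y {u : ℝ × ℝ → ℝ} {p : ℝ × ℝ} (h : DifferentiableAt ℝ u p) :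
    HasDerivAt (fun t => u (p.1, t)) (fderiv ℝ u p (0, 1)) p.2 := by
  have hline : HasDerivAt (fun t : ℝ => ((p.1, t) : ℝ × ℝ)) ((0 : ℝ), (1 : ℝ)) p.2 :=
    (hasDerivAt_const p.2 p.1).prodMk (hasDerivAt_id p.2)
  exact h.hasFDerivAt.comp_hasDerivAt p.2 hline


/-- Partial derivative in the first variable. -/
noncomputable def pX (u : ℝ × ℝ → ℝ) (p : ℝ × ℝ) : ℝ := deriv (fun t => u (t, p.2)) p.1

/-- Partial derivative in the second variable. -/
noncomputable def pY (u : ℝ × ℝ → ℝ) (p : ℝ × ℝ) : ℝ := deriv (fun t => u (p.1, t)) p.2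

/-- Second partial derivative in the first variable. -/
noncomputable def pXX (u : ℝ × ℝ → ℝ) (p : ℝ × ℝ) : ℝ := deriv (fun t => pX u (t, p.2)) p.1

/-- Second partial derivative in the second variable. -/
noncomputable def pYY (u : ℝ × ℝ → ℝ) (p : ℝ × ℝ) : ℝ := deriv (fun t => pY u (p.1, t)) p.2

/-- A nonnegative subharmonic function of finite energy on the half-cylinder,
vanishing on the boundary circle, is identically zero. -/
theorem statement1 (w : ℝ × ℝ → ℝ)
    (hcont : ContinuousOn w {p : ℝ × ℝ | 0 ≤ p.2})
    (hper : ∀ x y : ℝ, w (x + 2 * π, y) = w (x, y))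
    (hnonneg : ∀ p : ℝ × ℝ, 0 ≤ p.2 → 0 ≤ w p)
    (hC2 : ContDiffOn ℝ 2 w {p : ℝ × ℝ | 0 < p.2})
    (hsub : ∀ p : ℝ × ℝ, 0 < p.2 → 0 ≤ pXX w p + pYY w p)
    (hbdry : ∀ x : ℝ, w (x, 0) = 0)
    (henergy : IntegrableOn (fun p => pX w p ^ 2 + pY w p ^ 2)
      (Set.Ioo (0 : ℝ) (2 * π) ×ˢ Set.Ioi (0 : ℝ)))
    (p : ℝ × ℝ) (hp : 0 ≤ p.2) : w p = 0 := by
  have hU : IsOpen {p : ℝ × ℝ | 0 < p.2} := isOpen_lt continuous_const continuous_snd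
  set U : Set (ℝ × ℝ) := {p : ℝ × ℝ | 0 < p.2}
  have hdiff : ∀ q ∈ U, DifferentiableAt ℝ w q := fun q hq =>
    (hC2.differentiableOn (by norm_num)).differentiableAt (hU.mem_nhds hq)
  have hfd : ContDiffOn ℝ 1 (fun q => fderiv ℝ w q) U := hC2.fderiv_of_isOpen hU (by norm_num)
  set g1 : ℝ × ℝ → ℝ := fun q => fderiv ℝ w q (1, 0) with hg1def
  set g2 : ℝ × ℝ → ℝ := fun q => fderiv ℝ w q (0, 1) with hg2def
  have hg1C : ContDiffOn ℝ 1 g1 U := hfd.clm_apply contDiffOn_const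
  have hg2C : ContDiffOn ℝ 1 g2 U := hfd.clm_apply contDiffOn_const
  have hg1d : ∀ q ∈ U, DifferentiableAt ℝ g1 q := fun q hq =>
    (hg1C.differentiableOn one_ne_zero).differentiableAt (hU.mem_nhds hq)
  have hg2d : ∀ q ∈ U, DifferentiableAt ℝ g2 q := fun q hq =>
    (hg2C.differentiableOn one_ne_zero).differentiableAt (hU.mem_nhds hq)
  have hpX : ∀ q ∈ U, pX w q = g1 q := fun q hq => (hasDerivAt_slice_x (hdiff q hq)).deriv
  have hpY : ∀ q ∈ U, pY w q = g2 q := fun q hq => (hasDerivAt_slice_y (hdiff q hq)).deriv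
  have hpXX : ∀ q ∈ U, pXX w q = fderiv ℝ g1 q (1, 0) := by
    intro q hq
    have hfun : (fun t => pX w (t, q.2)) = fun t => g1 (t, q.2) :=
      funext fun t => hpX (t, q.2) hq
    rw [pXX, hfun]
    exact (hasDerivAt_slice_x (hg1d q hq)).deriv
  have hpYY : ∀ q ∈ U, pYY w q = fderiv ℝ g2 q (0, 1) := by
    intro q hq
    have hev : (fun t => pY w (q.1, t)) =ᶠ[nhds q.2] fun t => g2 (q.1, t) := by
      filter_upwards [eventually_gt_nhds hq] with t ht
      exact hpY (q.1, t) ht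
    rw [pYY, hev.deriv_eq]
    exact (hasDerivAt_slice_y (hg2d q hq)).deriv
  have hg1cont : ContinuousOn g1 U := hg1C.continuousOn
  have hg2cont : ContinuousOn g2 U := hg2C.continuousOn
  have hWxx : ContinuousOn (fun q => fderiv ℝ g1 q (1, 0)) U :=
    ((hg1C.continuousOn_fderiv_of_isOpen hU le_rfl).clm_apply continuousOn_const)
  have hWyy : ContinuousOn (fun q => fderiv ℝ g2 q (0, 1)) U :=
    ((hg2C.continuousOn_fderiv_of_isOpen hU le_rfl).clm_apply continuousOn_const)
  have hπ : (0:ℝ) < 2*π := by positivity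
  have hsliceU : ∀ (g : ℝ × ℝ → ℝ), ContinuousOn g U → ∀ t : ℝ, 0 < t →
      Continuous fun x => g (x, t) := fun g hg t ht =>
    hg.comp_continuous (continuous_id.prodMk continuous_const) fun x => ht
  set A : ℝ → ℝ := fun y => ∫ x in (0:ℝ)..(2*π), w (x, y) with hAdef
  set B : ℝ → ℝ := fun y => ∫ x in (0:ℝ)..(2*π), g2 (x, y) with hBdef
  set C : ℝ → ℝ := fun y => ∫ x in (0:ℝ)..(2*π), fderiv ℝ g2 (x, y) (0, 1) with hCdef
  have main : ∀ (u u' : ℝ × ℝ → ℝ), ContinuousOn u U → ContinuousOn u' U →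
      (∀ q : ℝ × ℝ, q ∈ U → HasDerivAt (fun t => u (q.1, t)) (u' q) q.2) →
      ∀ y : ℝ, 0 < y → HasDerivAt (fun s => ∫ x in (0:ℝ)..(2*π), u (x, s))
        (∫ x in (0:ℝ)..(2*π), u' (x, y)) y := by
    intro u u' hu hu' hd y hy
    have hK : IsCompact (Set.Icc (0:ℝ) (2*π) ×ˢ Set.Icc (y/2) (y + y/2)) :=
      isCompact_Icc.prod isCompact_Icc
    have hKU : (Set.Icc (0:ℝ) (2*π) ×ˢ Set.Icc (y/2) (y + y/2)) ⊆ U := by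
      rintro ⟨a, b⟩ ⟨-, hb⟩
      have : y/2 ≤ b := hb.1
      show 0 < b
      linarith
    obtain ⟨M, hM⟩ := hK.exists_bound_of_continuousOn (hu'.mono hKU)
    have hball : ∀ t ∈ Metric.ball y (y/2), 0 < t ∧ t ∈ Set.Icc (y/2) (y + y/2) := by
      intro t ht
      rw [Metric.mem_ball, Real.dist_eq, abs_sub_lt_iff] at ht
      constructor
      · linarith [ht.1, ht.2]
      · constructor <;> linarith [ht.1, ht.2]
    have hres := intervalIntegral.hasDerivAt_integral_of_dominated_loc_of_deriv_le
      (F := fun s x => u (x, s)) (F' := fun s x => u' (x, s)) (x₀ := y) (a := 0) (b := 2*π)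
      (bound := fun _ => M) (μ := volume) (Metric.ball_mem_nhds y (half_pos hy))
      (by filter_upwards [eventually_gt_nhds hy] with t ht
          exact (hsliceU u hu t ht).aestronglyMeasurable)
      ((hsliceU u hu y hy).intervalIntegrable _ _)
      (hsliceU u' hu' y hy).aestronglyMeasurable
      (ae_of_all _ fun x hx t ht => by
        rw [Set.uIoc_of_le hπ.le] at hx
        exact hM (x, t) ⟨⟨hx.1.le, hx.2⟩, (hball t ht).2⟩)
      (intervalIntegrable_const)
      (ae_of_all _ fun x hx t ht => hd (x, t) (hball t ht).1)
    exact hres.2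
  have hAderiv : ∀ y : ℝ, 0 < y → HasDerivAt A (B y) y :=
    main w g2 (hC2.continuousOn) hg2cont fun q hq => hasDerivAt_slice_y (hdiff q hq)
  have hBderiv : ∀ y : ℝ, 0 < y → HasDerivAt B (C y) y :=
    main g2 (fun q => fderiv ℝ g2 q (0, 1)) hg2cont hWyy fun q hq =>
      hasDerivAt_slice_y (hg2d q hq)
  have hCnonneg : ∀ y : ℝ, 0 < y → 0 ≤ C y := by
    intro y hy
    have hmemU : ∀ x : ℝ, ((x, y) : ℝ × ℝ) ∈ U := fun x => hy
    have hXXint : IntervalIntegrable (fun x => pXX w (x, y)) volume 0 (2*π) := by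
      have h : (fun x => pXX w (x, y)) = fun x => fderiv ℝ g1 (x, y) (1, 0) :=
        funext fun x => hpXX _ (hmemU x)
      rw [h]; exact (hsliceU _ hWxx y hy).intervalIntegrable _ _
    have hYYint : IntervalIntegrable (fun x => pYY w (x, y)) volume 0 (2*π) := by
      have h : (fun x => pYY w (x, y)) = fun x => fderiv ℝ g2 (x, y) (0, 1) :=
        funext fun x => hpYY _ (hmemU x)
      rw [h]; exact (hsliceU _ hWyy y hy).intervalIntegrable _ _
    have hFTC : ∫ x in (0:ℝ)..(2*π), pXX w (x, y) = pX w (2*π, y) - pX w (0, y) := by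
      apply intervalIntegral.integral_eq_sub_of_hasDerivAt (f := fun t => pX w (t, y))
      · intro x hx
        have hfun : (fun t => pX w (t, y)) = fun t => g1 (t, y) :=
          funext fun t => hpX _ (hmemU t)
        rw [hfun, hpXX _ (hmemU x)]
        exact hasDerivAt_slice_x (hg1d _ (hmemU x))
      · exact hXXint
    have hperX : pX w (2*π, y) = pX w (0, y) := by
      have h0 : (fun s => w (s + 2*π, y)) = fun s => w (s, y) := funext fun s => hper s y
      calc pX w (2*π, y) = deriv (fun s => w (s, y)) (0 + 2*π) := by rw [zero_add]; rfl
        _ = deriv (fun s => w (s + 2*π, y)) 0 := (deriv_comp_add_const (fun s => w (s, y)) (2*π) 0).symm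
        _ = pX w (0, y) := by rw [h0]; rfl
    have h1 : (0:ℝ) ≤ ∫ x in (0:ℝ)..(2*π), (pXX w (x, y) + pYY w (x, y)) :=
      intervalIntegral.integral_nonneg hπ.le fun x _ => hsub (x, y) hy
    rw [intervalIntegral.integral_add hXXint hYYint, hFTC, hperX, sub_self, zero_add] at h1
    have hC : C y = ∫ x in (0:ℝ)..(2*π), pYY w (x, y) := by
      rw [hCdef]
      exact intervalIntegral.integral_congr fun x _ => (hpYY _ (hmemU x)).symm
    rw [hC]; exact h1
  have hslicew : ∀ t : ℝ, 0 ≤ t → Continuous fun x => w (x, t) := fun t ht =>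
    hcont.comp_continuous (continuous_id.prodMk continuous_const) fun x => ht
  have hBmono : MonotoneOn B (Set.Ioi (0:ℝ)) := by
    apply monotoneOn_of_deriv_nonneg (convex_Ioi 0)
    · exact fun y hy => (hBderiv y hy).continuousAt.continuousWithinAt
    · intro y hy
      rw [interior_Ioi] at hy
      exact (hBderiv y hy).differentiableAt.differentiableWithinAt
    · intro y hy
      rw [interior_Ioi] at hy
      rw [(hBderiv y hy).deriv]
      exact hCnonneg y hy
  have hBnonpos : ∀ y : ℝ, 0 < y → B y ≤ 0 := by
    by_contra hcon
    push_neg at hcon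
    obtain ⟨y₁, hy₁, hc⟩ := hcon
    set c := B y₁ with hcdef
    set ε := c / (2*π) with hεdef
    have hεpos : 0 < ε := div_pos hc hπ
    set κ := c^2 / (2*π) with hκdef
    have hκpos : 0 < κ := div_pos (pow_pos hc 2) hπ
    have key : ∀ y : ℝ, y₁ < y → κ ≤ ∫ x in Set.Ioo (0:ℝ) (2*π), (g2 (x, y))^2 := by
      intro y hy
      have hy0 : 0 < y := hy₁.trans hy
      have hBy : c ≤ B y := hBmono (Set.mem_Ioi.2 hy₁) (Set.mem_Ioi.2 hy0) hy.le
      have hcont2 : Continuous fun x => g2 (x, y) := hsliceU _ hg2cont y hy0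
      have hint1 : IntervalIntegrable (fun x => 2*ε*(g2 (x, y)) - ε^2) volume 0 (2*π) :=
        ((continuous_const.mul hcont2).sub continuous_const).intervalIntegrable _ _
      have hint2 : IntervalIntegrable (fun x => (g2 (x, y))^2) volume 0 (2*π) :=
        (hcont2.pow 2).intervalIntegrable _ _
      have hmono := intervalIntegral.integral_mono_on hπ.le hint1 hint2
        (fun x _ => by nlinarith [sq_nonneg (g2 (x, y) - ε)])
      have hval : ∫ x in (0:ℝ)..(2*π), (2*ε*(g2 (x, y)) - ε^2) = 2*ε*(B y) - ε^2*(2*π) := by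
        rw [intervalIntegral.integral_sub (f := fun x => 2*ε*(g2 (x, y))) ((continuous_const.mul hcont2).intervalIntegrable _ _)
          intervalIntegrable_const, intervalIntegral.integral_const_mul,
          intervalIntegral.integral_const]
        rw [hBdef]
        simp only [smul_eq_mul, sub_zero]
        ring
      have h2 : κ ≤ ∫ x in (0:ℝ)..(2*π), (g2 (x, y))^2 := by
        refine le_trans ?_ hmono
        rw [hval]
        have hκval : 2*ε*c - ε^2*(2*π) = κ := by
          rw [hεdef, hκdef]
          field_simp
          ring
        nlinarith [hεpos.le, hBy]
      rw [intervalIntegral.integral_of_le hπ.le, ← setIntegral_congr_set Ioo_ae_eq_Ioc] at h2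
      exact h2
    have hsub2 : (Set.Ioo (0:ℝ) (2*π) ×ˢ Set.Ioi y₁) ⊆ (Set.Ioo (0:ℝ) (2*π) ×ˢ Set.Ioi (0:ℝ)) :=
      Set.prod_mono_right (Set.Ioi_subset_Ioi hy₁.le)
    have hSU : (Set.Ioo (0:ℝ) (2*π) ×ˢ Set.Ioi y₁) ⊆ U := by
      rintro ⟨a, b⟩ ⟨-, hb⟩
      exact hy₁.trans hb
    have hmeasS : MeasurableSet (Set.Ioo (0:ℝ) (2*π) ×ˢ Set.Ioi y₁) :=
      measurableSet_Ioo.prod measurableSet_Ioi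
    have hIS : IntegrableOn (fun q => (g2 q)^2) (Set.Ioo (0:ℝ) (2*π) ×ˢ Set.Ioi y₁) := by
      apply Integrable.mono (henergy.mono_set hsub2)
      · exact ((hg2cont.mono hSU).pow 2).aestronglyMeasurable hmeasS
      · rw [ae_restrict_iff' hmeasS]
        refine ae_of_all _ fun q hq => ?_
        have hqU : q ∈ U := hSU hq
        rw [Real.norm_eq_abs, Real.norm_eq_abs, abs_of_nonneg (by positivity),
          abs_of_nonneg (by positivity), ← hpY q hqU]
        nlinarith [sq_nonneg (pX w q)]
    rw [IntegrableOn, Measure.volume_eq_prod, ← Measure.prod_restrict] at hIS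
    have hInt := hIS.integral_prod_right
    have hfin := hInt.measure_norm_ge_lt_top hκpos
    have hinf : volume.restrict (Set.Ioi y₁)
        {y : ℝ | κ ≤ ‖∫ x in Set.Ioo (0:ℝ) (2*π), (g2 (x, y))^2‖} = ⊤ := by
      have h1 : volume.restrict (Set.Ioi y₁) (Set.Ioi y₁) = ⊤ := by
        rw [Measure.restrict_apply measurableSet_Ioi, Set.inter_self, Real.volume_Ioi]
      refine top_unique (h1 ▸ measure_mono fun y hy => ?_)
      rw [Set.mem_setOf_eq, Real.norm_eq_abs]
      exact le_trans (key y hy) (le_abs_self _)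
    rw [hinf] at hfin
    exact lt_irrefl _ hfin
  have hAanti : AntitoneOn A (Set.Ioi (0:ℝ)) := by
    apply antitoneOn_of_deriv_nonpos (convex_Ioi 0)
    · exact fun y hy => (hAderiv y hy).continuousAt.continuousWithinAt
    · intro y hy
      rw [interior_Ioi] at hy
      exact (hAderiv y hy).differentiableAt.differentiableWithinAt
    · intro y hy
      rw [interior_Ioi] at hy
      rw [(hAderiv y hy).deriv]
      exact hBnonpos y hy
  have hAnonneg : ∀ y : ℝ, 0 ≤ y → 0 ≤ A y := fun y hy =>
    intervalIntegral.integral_nonneg hπ.le fun x _ => hnonneg (x, y) hy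
  have hA0 : Filter.Tendsto A (nhdsWithin 0 (Set.Ioi 0)) (nhds 0) := by
    have hsubK : (Set.Icc (0:ℝ) (2*π) ×ˢ Set.Icc (0:ℝ) 1) ⊆ {p : ℝ × ℝ | 0 ≤ p.2} := by
      rintro ⟨a, b⟩ ⟨-, hb⟩
      exact hb.1
    obtain ⟨M₀, hM₀⟩ := (isCompact_Icc.prod isCompact_Icc).exists_bound_of_continuousOn
      (hcont.mono hsubK)
    have hcw : ContinuousWithinAt A (Set.Ioi 0) 0 := by
      apply intervalIntegral.continuousWithinAt_of_dominated_interval (bound := fun _ => M₀)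
      · filter_upwards [self_mem_nhdsWithin] with t ht
        exact (hslicew t (le_of_lt ht)).aestronglyMeasurable
      · filter_upwards [self_mem_nhdsWithin,
          eventually_nhdsWithin_of_eventually_nhds (eventually_le_nhds (by norm_num : (0:ℝ) < 1))]
          with t ht ht1
        refine ae_of_all _ fun x hx => ?_
        rw [Set.uIoc_of_le hπ.le] at hx
        exact hM₀ (x, t) ⟨⟨hx.1.le, hx.2⟩, ⟨le_of_lt ht, ht1⟩⟩
      · exact intervalIntegrable_const
      · refine ae_of_all _ fun x _ => ?_
        have houter : ContinuousWithinAt w {p : ℝ × ℝ | 0 ≤ p.2} ((x, 0) : ℝ × ℝ) :=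
          hcont (x, 0) (by simp)
        have hinner : ContinuousWithinAt (fun t : ℝ => ((x, t) : ℝ × ℝ)) (Set.Ioi 0) 0 :=
          (continuous_const.prodMk continuous_id).continuousWithinAt
        exact houter.comp hinner fun t ht => show (0:ℝ) ≤ t from le_of_lt ht
    have hA00 : A 0 = 0 := by
      rw [hAdef]
      simp [hbdry]
    have htd := hcw.tendsto
    rwa [hA00] at htd
  have hAzero : ∀ y : ℝ, 0 < y → A y = 0 := by
    intro y hy
    have hle : A y ≤ 0 := by
      have h1 : ∀ᶠ δ in nhdsWithin 0 (Set.Ioi 0), A y ≤ A δ := by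
        filter_upwards [Ioo_mem_nhdsGT_of_mem (Set.left_mem_Ico.2 hy)] with δ hδ
        exact hAanti (Set.mem_Ioi.2 hδ.1) (Set.mem_Ioi.2 hy) hδ.2.le
      exact ge_of_tendsto hA0 h1
    exact le_antisymm hle (hAnonneg y hy.le)
  rcases eq_or_lt_of_le hp with h0 | hpos
  · rw [← Prod.mk.eta (p := p), ← h0]
    exact hbdry p.1
  · have hAy := hAzero p.2 hpos
    set f : ℝ → ℝ := fun x => w (x, p.2) with hfdef
    have hfc : Continuous f := hslicew p.2 hp
    have hfnn : (0 : ℝ → ℝ) ≤ f := fun x => hnonneg (x, p.2) hp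
    have h0 : ∫ x in Set.Ioc (0:ℝ) (2*π), f x = 0 := by
      rw [← intervalIntegral.integral_of_le hπ.le]
      exact hAy
    have hae : f =ᵐ[volume.restrict (Set.Ioc (0:ℝ) (2*π))] 0 :=
      (integral_eq_zero_iff_of_nonneg hfnn hfc.integrableOn_Ioc).1 h0
    have hEq : Set.EqOn f 0 (Set.Icc 0 (2*π)) := by
      have hae2 : f =ᵐ[volume.restrict (Set.Icc (0:ℝ) (2*π))] 0 := by
        rw [← Measure.restrict_congr_set Ioc_ae_eq_Icc]
        exact hae
      refine Measure.eqOn_of_ae_eq hae2 hfc.continuousOn continuousOn_const ?_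
      rw [interior_Icc, closure_Ioo (ne_of_lt hπ)]
    have hperf : Function.Periodic f (2*π) := fun s => hper s p.2
    have hz1 : 0 ≤ p.1 - ⌊p.1 / (2*π)⌋ * (2*π) := Int.sub_floor_div_mul_nonneg p.1 hπ
    have hz2 : p.1 - ⌊p.1 / (2*π)⌋ * (2*π) < 2*π := Int.sub_floor_div_mul_lt p.1 hπ
    have hfx : f p.1 = 0 := by
      rw [← hperf.sub_int_mul_eq ⌊p.1 / (2*π)⌋]
      exact hEq ⟨hz1, hz2.le⟩
    rw [← Prod.mk.eta (p := p)]
    exact hfx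
end

section
/- Let u : ℝ × [0,∞) → ℝ be continuous, 2π-periodic in the first variable x, nonnegative, harmonic on the open half-cylinder ℝ × (0,∞) (i.e. C² with u_xx + u_yy = 0), with u(x,0) = 0 for all x, and with finite Dirichlet energy ∫_{(0,2π)×(0,∞)} |∇u|² dx dy < ∞. Then u ≡ 0. -/
open MeasureTheory Real

section calc1
variable {u : ℝ × ℝ → ℝ}

def hyp (u : ℝ × ℝ → ℝ) : Prop := ContDiffOn ℝ 2 u {p : ℝ × ℝ | 0 < p.2}

def S : Set (ℝ × ℝ) := {p : ℝ × ℝ | 0 < p.2}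

lemma hSopen : IsOpen S := isOpen_lt continuous_const continuous_snd

lemma hdiff (hC2 : ContDiffOn ℝ 2 u {p : ℝ × ℝ | 0 < p.2}) : ∀ p ∈ S, DifferentiableAt ℝ u p := fun p hp =>
  (hC2.contDiffAt (hSopen.mem_nhds hp)).differentiableAt (by norm_num)

lemma hw1 (hC2 : ContDiffOn ℝ 2 u {p : ℝ × ℝ | 0 < p.2}) : ContDiffOn ℝ 1 (fderiv ℝ u) S :=
  hC2.fderiv_of_isOpen hSopen (by norm_num)

lemma hwdiff (hC2 : ContDiffOn ℝ 2 u {p : ℝ × ℝ | 0 < p.2}) : ∀ p ∈ S, DifferentiableAt ℝ (fderiv ℝ u) p := fun p hp =>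
  ((hw1 hC2).contDiffAt (hSopen.mem_nhds hp)).differentiableAt (by norm_num)

-- path derivatives
lemma pathX (x y : ℝ) : HasDerivAt (fun t : ℝ => (t, y)) ((1 : ℝ), (0 : ℝ)) x :=
  (hasDerivAt_id x).prodMk (hasDerivAt_const x y)

lemma pathY (x y : ℝ) : HasDerivAt (fun t : ℝ => (x, t)) ((0 : ℝ), (1 : ℝ)) y :=
  (hasDerivAt_const y x).prodMk (hasDerivAt_id y)

lemma hasDerivX (hC2 : ContDiffOn ℝ 2 u {p : ℝ × ℝ | 0 < p.2}) {p : ℝ × ℝ} (hp : p ∈ S) :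
    HasDerivAt (fun t => u (t, p.2)) (fderiv ℝ u p (1, 0)) p.1 := by
  have h := ((hdiff hC2 p hp).hasFDerivAt).comp_hasDerivAt p.1 (pathX p.1 p.2)
  simpa [Function.comp_def] using h

lemma hasDerivY (hC2 : ContDiffOn ℝ 2 u {p : ℝ × ℝ | 0 < p.2}) {p : ℝ × ℝ} (hp : p ∈ S) :
    HasDerivAt (fun t => u (p.1, t)) (fderiv ℝ u p (0, 1)) p.2 := by
  have h := ((hdiff hC2 p hp).hasFDerivAt).comp_hasDerivAt p.2 (pathY p.1 p.2)
  simpa [Function.comp_def] using h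

lemma pX_eq (hC2 : ContDiffOn ℝ 2 u {p : ℝ × ℝ | 0 < p.2}) {p : ℝ × ℝ} (hp : p ∈ S) : pX u p = fderiv ℝ u p (1, 0) :=
  (hasDerivX hC2 hp).deriv

lemma pY_eq (hC2 : ContDiffOn ℝ 2 u {p : ℝ × ℝ | 0 < p.2}) {p : ℝ × ℝ} (hp : p ∈ S) : pY u p = fderiv ℝ u p (0, 1) :=
  (hasDerivY hC2 hp).deriv

lemma hasDerivAt_f1 (hC2 : ContDiffOn ℝ 2 u {p : ℝ × ℝ | 0 < p.2}) {p : ℝ × ℝ} (hp : p ∈ S) :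
    HasFDerivAt (fun q => fderiv ℝ u q (1, 0))
      ((ContinuousLinearMap.apply ℝ ℝ ((1:ℝ), (0:ℝ))).comp (fderiv ℝ (fderiv ℝ u) p)) p :=
  (ContinuousLinearMap.apply ℝ ℝ ((1:ℝ), (0:ℝ))).hasFDerivAt.comp p
    (hwdiff hC2 p hp).hasFDerivAt

lemma hasDerivAt_f2 (hC2 : ContDiffOn ℝ 2 u {p : ℝ × ℝ | 0 < p.2}) {p : ℝ × ℝ} (hp : p ∈ S) :
    HasFDerivAt (fun q => fderiv ℝ u q (0, 1))
      ((ContinuousLinearMap.apply ℝ ℝ ((0:ℝ), (1:ℝ))).comp (fderiv ℝ (fderiv ℝ u) p)) p :=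
  (ContinuousLinearMap.apply ℝ ℝ ((0:ℝ), (1:ℝ))).hasFDerivAt.comp p
    (hwdiff hC2 p hp).hasFDerivAt

lemma hasDerivXX (hC2 : ContDiffOn ℝ 2 u {p : ℝ × ℝ | 0 < p.2}) {p : ℝ × ℝ} (hp : p ∈ S) :
    HasDerivAt (fun t => pX u (t, p.2)) (fderiv ℝ (fderiv ℝ u) p (1, 0) (1, 0)) p.1 := by
  have h1 : (fun t => pX u (t, p.2)) = fun t => fderiv ℝ u (t, p.2) (1, 0) := by
    funext t
    exact pX_eq hC2 (by simpa [S] using hp)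
  rw [h1]
  have h := (hasDerivAt_f1 hC2 hp).comp_hasDerivAt p.1 (pathX p.1 p.2)
  simpa [Function.comp_def] using h

lemma hasDerivYY (hC2 : ContDiffOn ℝ 2 u {p : ℝ × ℝ | 0 < p.2}) {p : ℝ × ℝ} (hp : p ∈ S) :
    HasDerivAt (fun t => pY u (p.1, t)) (fderiv ℝ (fderiv ℝ u) p (0, 1) (0, 1)) p.2 := by
  have h1 : ∀ᶠ t in nhds p.2, pY u (p.1, t) = fderiv ℝ u (p.1, t) (0, 1) := by
    have : ∀ᶠ t in nhds p.2, 0 < t := eventually_gt_nhds hp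
    filter_upwards [this] with t ht
    exact pY_eq hC2 (by simpa [S] using ht)
  have h := (hasDerivAt_f2 hC2 hp).comp_hasDerivAt p.2 (pathY p.1 p.2)
  have h' : HasDerivAt (fun t => fderiv ℝ u (p.1, t) (0, 1))
      (fderiv ℝ (fderiv ℝ u) p (0, 1) (0, 1)) p.2 := by simpa [Function.comp_def] using h
  exact h'.congr_of_eventuallyEq (h1.mono fun t ht => ht)

lemma pXX_eq (hC2 : ContDiffOn ℝ 2 u {p : ℝ × ℝ | 0 < p.2}) {p : ℝ × ℝ} (hp : p ∈ S) :
    pXX u p = fderiv ℝ (fderiv ℝ u) p (1, 0) (1, 0) := (hasDerivXX hC2 hp).deriv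

lemma pYY_eq (hC2 : ContDiffOn ℝ 2 u {p : ℝ × ℝ | 0 < p.2}) {p : ℝ × ℝ} (hp : p ∈ S) :
    pYY u p = fderiv ℝ (fderiv ℝ u) p (0, 1) (0, 1) := (hasDerivYY hC2 hp).deriv

lemma contOn_w (hC2 : ContDiffOn ℝ 2 u {p : ℝ × ℝ | 0 < p.2}) : ContinuousOn (fderiv ℝ u) S := hC2.continuousOn_fderiv_of_isOpen hSopen (by norm_num)

lemma contOn_w2 (hC2 : ContDiffOn ℝ 2 u {p : ℝ × ℝ | 0 < p.2}) : ContinuousOn (fderiv ℝ (fderiv ℝ u)) S :=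
  (hw1 hC2).continuousOn_fderiv_of_isOpen hSopen (le_refl _)

lemma contOn_pX (hC2 : ContDiffOn ℝ 2 u {p : ℝ × ℝ | 0 < p.2}) : ContinuousOn (pX u) S := by
  have : ContinuousOn (fun p => fderiv ℝ u p (1, 0)) S :=
    (contOn_w hC2).clm_apply continuousOn_const
  exact this.congr fun p hp => pX_eq hC2 hp

lemma contOn_pY (hC2 : ContDiffOn ℝ 2 u {p : ℝ × ℝ | 0 < p.2}) : ContinuousOn (pY u) S := by
  have : ContinuousOn (fun p => fderiv ℝ u p (0, 1)) S :=
    (contOn_w hC2).clm_apply continuousOn_const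
  exact this.congr fun p hp => pY_eq hC2 hp

lemma contOn_pXX (hC2 : ContDiffOn ℝ 2 u {p : ℝ × ℝ | 0 < p.2}) : ContinuousOn (pXX u) S := by
  have : ContinuousOn (fun p => fderiv ℝ (fderiv ℝ u) p (1, 0) (1, 0)) S :=
    ((contOn_w2 hC2).clm_apply continuousOn_const).clm_apply continuousOn_const
  exact this.congr fun p hp => pXX_eq hC2 hp

lemma contOn_pYY (hC2 : ContDiffOn ℝ 2 u {p : ℝ × ℝ | 0 < p.2}) : ContinuousOn (pYY u) S := by
  have : ContinuousOn (fun p => fderiv ℝ (fderiv ℝ u) p (0, 1) (0, 1)) S :=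
    ((contOn_w2 hC2).clm_apply continuousOn_const).clm_apply continuousOn_const
  exact this.congr fun p hp => pYY_eq hC2 hp

lemma hasDerivXX' (hC2 : ContDiffOn ℝ 2 u {p : ℝ × ℝ | 0 < p.2}) {p : ℝ × ℝ} (hp : p ∈ S) :
    HasDerivAt (fun t => pX u (t, p.2)) (pXX u p) p.1 := by
  rw [pXX_eq hC2 hp]; exact hasDerivXX hC2 hp

lemma hasDerivYY' (hC2 : ContDiffOn ℝ 2 u {p : ℝ × ℝ | 0 < p.2}) {p : ℝ × ℝ} (hp : p ∈ S) :
    HasDerivAt (fun t => pY u (p.1, t)) (pYY u p) p.2 := by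
  rw [pYY_eq hC2 hp]; exact hasDerivYY hC2 hp

lemma hasDerivY' (hC2 : ContDiffOn ℝ 2 u {p : ℝ × ℝ | 0 < p.2}) {p : ℝ × ℝ} (hp : p ∈ S) :
    HasDerivAt (fun t => u (p.1, t)) (pY u p) p.2 := by
  rw [pY_eq hC2 hp]; exact hasDerivY hC2 hp

end calc1

section stage2
variable {u : ℝ × ℝ → ℝ}

lemma mapsToS {y : ℝ} (hy : 0 < y) : Set.MapsTo (fun t : ℝ => (t, y)) (Set.uIcc 0 (2*π)) S :=
  fun t _ => by simp [S, hy]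

lemma contOn_slice {g : ℝ × ℝ → ℝ} (hg : ContinuousOn g S) {y : ℝ} (hy : 0 < y) :
    ContinuousOn (fun x => g (x, y)) (Set.uIcc 0 (2*π)) :=
  hg.comp ((continuous_id.prodMk continuous_const).continuousOn) (mapsToS hy)

-- FTC in x for pX
lemma ftc_x (hC2 : ContDiffOn ℝ 2 u {p : ℝ × ℝ | 0 < p.2}) {y : ℝ} (hy : 0 < y) :
    ∫ x in (0:ℝ)..(2*π), pXX u (x, y) = pX u (2*π, y) - pX u (0, y) := by
  apply intervalIntegral.integral_eq_sub_of_hasDerivAt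
  · intro x _
    exact hasDerivXX' hC2 (show ((x,y) : ℝ × ℝ) ∈ S from hy)
  · exact (contOn_slice (contOn_pXX hC2) hy).intervalIntegrable

-- periodicity of pX
lemma pX_periodic (hper : ∀ x y : ℝ, u (x + 2 * π, y) = u (x, y)) (x y : ℝ) :
    pX u (x + 2*π, y) = pX u (x, y) := by
  unfold pX
  simp only
  rw [← deriv_comp_add_const (fun t => u (t, y)) (2*π) x]
  congr 1
  funext t
  rw [hper t y]

-- FTC in y
lemma ftc_y_pY (hC2 : ContDiffOn ℝ 2 u {p : ℝ × ℝ | 0 < p.2}) {x y₁ y₂ : ℝ}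
    (h1 : 0 < y₁) (h12 : y₁ ≤ y₂) :
    ∫ y in y₁..y₂, pYY u (x, y) = pY u (x, y₂) - pY u (x, y₁) := by
  apply intervalIntegral.integral_eq_sub_of_hasDerivAt
  · intro y hy
    rw [Set.uIcc_of_le h12] at hy
    exact hasDerivYY' hC2 (show ((x,y):ℝ×ℝ) ∈ S from lt_of_lt_of_le h1 hy.1)
  · apply ContinuousOn.intervalIntegrable
    apply (contOn_pYY hC2).comp ((continuous_const.prodMk continuous_id).continuousOn)
    intro y hy
    rw [Set.uIcc_of_le h12] at hy
    exact show (0:ℝ) < y from lt_of_lt_of_le h1 hy.1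

lemma ftc_y_u (hC2 : ContDiffOn ℝ 2 u {p : ℝ × ℝ | 0 < p.2}) {x y₁ y₂ : ℝ}
    (h1 : 0 < y₁) (h12 : y₁ ≤ y₂) :
    ∫ y in y₁..y₂, pY u (x, y) = u (x, y₂) - u (x, y₁) := by
  apply intervalIntegral.integral_eq_sub_of_hasDerivAt
  · intro y hy
    rw [Set.uIcc_of_le h12] at hy
    exact hasDerivY' hC2 (show ((x,y):ℝ×ℝ) ∈ S from lt_of_lt_of_le h1 hy.1)
  · apply ContinuousOn.intervalIntegrable
    apply (contOn_pY hC2).comp ((continuous_const.prodMk continuous_id).continuousOn)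
    intro y hy
    rw [Set.uIcc_of_le h12] at hy
    exact show (0:ℝ) < y from lt_of_lt_of_le h1 hy.1

-- Fubini swap on a compact rectangle
lemma swap_rect {g : ℝ × ℝ → ℝ} {a b c d : ℝ} (hab : a ≤ b) (hcd : c ≤ d)
    (hg : ContinuousOn g (Set.Icc a b ×ˢ Set.Icc c d)) :
    ∫ x in a..b, ∫ y in c..d, g (x, y) = ∫ y in c..d, ∫ x in a..b, g (x, y) := by
  have hint : Integrable g ((volume.restrict (Set.Ioc a b)).prod (volume.restrict (Set.Ioc c d))) := by
    rw [Measure.prod_restrict, ← Measure.volume_eq_prod]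
    have h1 : IntegrableOn g (Set.Icc a b ×ˢ Set.Icc c d) :=
      hg.integrableOn_compact (isCompact_Icc.prod isCompact_Icc)
    exact h1.mono_set (Set.prod_mono Set.Ioc_subset_Icc_self Set.Ioc_subset_Icc_self)
  simp only [intervalIntegral.integral_of_le hab, intervalIntegral.integral_of_le hcd]
  exact integral_integral_swap (f := fun x y => g (x, y)) hint

end stage2

section stage3
variable {u : ℝ × ℝ → ℝ}

lemma rect_sub_S {y₁ y₂ : ℝ} (h1 : 0 < y₁) :
    (Set.Icc (0:ℝ) (2*π) ×ˢ Set.Icc y₁ y₂ : Set (ℝ × ℝ)) ⊆ S := by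
  rintro ⟨x, y⟩ ⟨-, hy⟩
  exact show (0:ℝ) < y from lt_of_lt_of_le h1 hy.1

lemma g_const (hC2 : ContDiffOn ℝ 2 u {p : ℝ × ℝ | 0 < p.2})
    (hper : ∀ x y : ℝ, u (x + 2 * π, y) = u (x, y))
    (hharm : ∀ p : ℝ × ℝ, 0 < p.2 → pXX u p + pYY u p = 0)
    {y₁ y₂ : ℝ} (h1 : 0 < y₁) (h12 : y₁ ≤ y₂) :
    (∫ x in (0:ℝ)..(2*π), pY u (x, y₂)) = ∫ x in (0:ℝ)..(2*π), pY u (x, y₁) := by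
  have h2 : 0 < y₂ := lt_of_lt_of_le h1 h12
  have int1 : IntervalIntegrable (fun x => pY u (x, y₁)) volume 0 (2*π) :=
    (contOn_slice (contOn_pY hC2) h1).intervalIntegrable
  have int2 : IntervalIntegrable (fun x => pY u (x, y₂)) volume 0 (2*π) :=
    (contOn_slice (contOn_pY hC2) h2).intervalIntegrable
  have hsub : (∫ x in (0:ℝ)..(2*π), (pY u (x, y₂) - pY u (x, y₁)))
      = (∫ x in (0:ℝ)..(2*π), pY u (x, y₂)) - ∫ x in (0:ℝ)..(2*π), pY u (x, y₁) :=
    intervalIntegral.integral_sub int2 int1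
  have key : (∫ x in (0:ℝ)..(2*π), (pY u (x, y₂) - pY u (x, y₁))) = 0 := by
    have e1 : ∀ x : ℝ, pY u (x, y₂) - pY u (x, y₁) = ∫ y in y₁..y₂, pYY u (x, y) :=
      fun x => (ftc_y_pY hC2 h1 h12).symm
    calc (∫ x in (0:ℝ)..(2*π), (pY u (x, y₂) - pY u (x, y₁)))
        = ∫ x in (0:ℝ)..(2*π), ∫ y in y₁..y₂, pYY u (x, y) := by
          apply intervalIntegral.integral_congr
          intro x _; exact e1 x
      _ = ∫ y in y₁..y₂, ∫ x in (0:ℝ)..(2*π), pYY u (x, y) := by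
          apply swap_rect (by positivity) h12
          exact (contOn_pYY hC2).mono (rect_sub_S h1)
      _ = ∫ _y in y₁..y₂, (0:ℝ) := by
          apply intervalIntegral.integral_congr
          intro y hy
          rw [Set.uIcc_of_le h12] at hy
          have hy0 : 0 < y := lt_of_lt_of_le h1 hy.1
          have hpt : ∀ x : ℝ, pYY u (x, y) = -pXX u (x, y) := fun x => by
            have := hharm (x, y) hy0; linarith
          have hpp := pX_periodic hper 0 y
          rw [zero_add] at hpp
          calc (∫ x in (0:ℝ)..(2*π), pYY u (x, y))
              = ∫ x in (0:ℝ)..(2*π), -pXX u (x, y) :=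
                intervalIntegral.integral_congr (fun x _ => hpt x)
            _ = -(pX u (2*π, y) - pX u (0, y)) := by
                rw [intervalIntegral.integral_neg, ftc_x hC2 hy0]
            _ = 0 := by rw [hpp]; ring
      _ = 0 := intervalIntegral.integral_zero
  linarith [hsub, key]

end stage3

section stage3b
variable {u : ℝ × ℝ → ℝ}

lemma m_diff (hC2 : ContDiffOn ℝ 2 u {p : ℝ × ℝ | 0 < p.2})
    {y₁ y₂ : ℝ} (h1 : 0 < y₁) (h12 : y₁ ≤ y₂) :
    (∫ x in (0:ℝ)..(2*π), u (x, y₂)) - (∫ x in (0:ℝ)..(2*π), u (x, y₁))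
      = ∫ y in y₁..y₂, ∫ x in (0:ℝ)..(2*π), pY u (x, y) := by
  have h2 : 0 < y₂ := lt_of_lt_of_le h1 h12
  have hcu : ContinuousOn u S := hC2.continuousOn
  have int1 : IntervalIntegrable (fun x => u (x, y₁)) volume 0 (2*π) :=
    (contOn_slice hcu h1).intervalIntegrable
  have int2 : IntervalIntegrable (fun x => u (x, y₂)) volume 0 (2*π) :=
    (contOn_slice hcu h2).intervalIntegrable
  calc (∫ x in (0:ℝ)..(2*π), u (x, y₂)) - (∫ x in (0:ℝ)..(2*π), u (x, y₁))
      = ∫ x in (0:ℝ)..(2*π), (u (x, y₂) - u (x, y₁)) :=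
        (intervalIntegral.integral_sub int2 int1).symm
    _ = ∫ x in (0:ℝ)..(2*π), ∫ y in y₁..y₂, pY u (x, y) := by
        apply intervalIntegral.integral_congr
        intro x _
        exact (ftc_y_u hC2 h1 h12).symm
    _ = ∫ y in y₁..y₂, ∫ x in (0:ℝ)..(2*π), pY u (x, y) := by
        apply swap_rect (by positivity) h12
        exact (contOn_pY hC2).mono (rect_sub_S h1)

end stage3b

section stage4
variable {u : ℝ × ℝ → ℝ}

lemma cont_pY_slice (hC2 : ContDiffOn ℝ 2 u {p : ℝ × ℝ | 0 < p.2}) {y : ℝ} (hy : 0 < y) :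
    Continuous (fun x => pY u (x, y)) := by
  rw [← continuousOn_univ]
  apply (contOn_pY hC2).comp ((continuous_id.prodMk continuous_const).continuousOn)
  intro x _
  exact show (0:ℝ) < y from hy

lemma slice_lower (hC2 : ContDiffOn ℝ 2 u {p : ℝ × ℝ | 0 < p.2})
    {y a : ℝ} (hy : 0 < y) (ha : a = ∫ x in (0:ℝ)..(2*π), pY u (x, y)) :
    ENNReal.ofReal (a^2 / (2*π)) ≤ ∫⁻ x in Set.Ioo 0 (2*π), ENNReal.ofReal ((pY u (x, y))^2) := by
  set f : ℝ → ℝ := fun x => pY u (x, y) with hf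
  have hfc : Continuous f := cont_pY_slice hC2 hy
  set ν := volume.restrict (Set.Ioo (0:ℝ) (2*π)) with hν
  haveI : IsFiniteMeasure ν := ⟨by
    rw [hν, Measure.restrict_apply_univ]; exact measure_Ioo_lt_top⟩
  by_cases hI : Integrable (fun x => f x ^ 2) ν
  · -- Cauchy-Schwarz case
    have hfint : Integrable f ν := by
      apply Integrable.mono (hI.add (integrable_const 1)) hfc.aestronglyMeasurable
      filter_upwards with x
      have h1 : (0:ℝ) ≤ f x ^ 2 + 1 := by positivity
      simp only [Pi.add_apply, Real.norm_eq_abs]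
      rw [abs_of_nonneg h1]
      rcases le_or_gt (|f x|) 1 with h | h
      · nlinarith [sq_nonneg (f x)]
      · nlinarith [sq_abs (f x)]
    have hmass : (ν Set.univ).toReal = 2*π := by
      rw [hν, Measure.restrict_apply_univ, Real.volume_Ioo, sub_zero,
        ENNReal.toReal_ofReal (by positivity)]
    have haint : a = ∫ x, f x ∂ν := by
      rw [ha, intervalIntegral.integral_of_le (by positivity), integral_Ioc_eq_integral_Ioo]
    set k : ℝ := a / (2*π) with hk
    have hexp : (0:ℝ) ≤ (∫ x, f x ^ 2 ∂ν) - 2*k*a + k^2*(2*π) := by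
      have h0 : (0:ℝ) ≤ ∫ x, (f x - k)^2 ∂ν := integral_nonneg fun x => sq_nonneg _
      have heq : (fun x => (f x - k)^2) = fun x => (f x ^ 2 - (2*k) * f x) + k^2 := by
        funext x; ring
      have hmul : Integrable (fun x => 2*k*f x) ν := hfint.const_mul (2*k)
      have hsub2 : Integrable (fun x => f x ^ 2 - 2*k*f x) ν := hI.sub hmul
      have e1 : ∫ x, (f x ^ 2 - 2*k*f x + k^2) ∂ν
          = (∫ x, (f x ^ 2 - 2*k*f x) ∂ν) + ∫ _x, (k^2 : ℝ) ∂ν :=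
        integral_add hsub2 (integrable_const _)
      have e2 : ∫ x, (f x ^ 2 - 2*k*f x) ∂ν
          = (∫ x, f x ^ 2 ∂ν) - ∫ x, 2*k*f x ∂ν := integral_sub hI hmul
      have e3 : ∫ x, 2*k*f x ∂ν = 2*k*∫ x, f x ∂ν := integral_const_mul _ _
      have e4 : ∫ _x, (k^2 : ℝ) ∂ν = (2*π) * k^2 := by
        rw [integral_const, measureReal_def, hmass, smul_eq_mul]
      rw [heq, e1, e2, e3, e4, ← haint] at h0
      nlinarith [h0]
    have hcs : a^2/(2*π) ≤ ∫ x, f x ^ 2 ∂ν := by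
      have hπ : (0:ℝ) < 2*π := by positivity
      rw [hk] at hexp
      have : 2*(a/(2*π))*a = a^2/π := by field_simp
      have h2 : (a/(2*π))^2*(2*π) = a^2/(2*π) := by field_simp
      rw [this, h2] at hexp
      have h3 : a^2/π = 2*(a^2/(2*π)) := by field_simp
      linarith [hexp, h3.symm ▸ hexp]
    calc ENNReal.ofReal (a^2/(2*π)) ≤ ENNReal.ofReal (∫ x, f x ^ 2 ∂ν) :=
          ENNReal.ofReal_le_ofReal hcs
      _ = ∫⁻ x, ENNReal.ofReal (f x ^ 2) ∂ν :=
          ofReal_integral_eq_lintegral_ofReal hI (Filter.Eventually.of_forall fun x => sq_nonneg _)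
  · -- non-integrable case: lintegral is infinite
    have hmeas : AEStronglyMeasurable (fun x => f x ^ 2) ν := (hfc.pow 2).aestronglyMeasurable
    have htop : ∫⁻ x, ENNReal.ofReal (f x ^ 2) ∂ν = ⊤ := by
      by_contra h
      apply hI
      refine ⟨hmeas, ?_⟩
      rw [hasFiniteIntegral_iff_norm]
      have heq : ∀ x, ENNReal.ofReal ‖f x ^ 2‖ = ENNReal.ofReal (f x ^ 2) := fun x => by
        rw [Real.norm_eq_abs, abs_of_nonneg (sq_nonneg _)]
      simp only [heq]
      exact lt_top_iff_ne_top.mpr h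
    rw [htop]; exact le_top

end stage4

section stage5
variable {u : ℝ × ℝ → ℝ}

lemma g_zero (hC2 : ContDiffOn ℝ 2 u {p : ℝ × ℝ | 0 < p.2})
    (hper : ∀ x y : ℝ, u (x + 2 * π, y) = u (x, y))
    (hharm : ∀ p : ℝ × ℝ, 0 < p.2 → pXX u p + pYY u p = 0)
    (henergy : IntegrableOn (fun p => pX u p ^ 2 + pY u p ^ 2)
      (Set.Ioo (0 : ℝ) (2 * π) ×ˢ Set.Ioi (0 : ℝ))) :
    ∀ y : ℝ, 0 < y → (∫ x in (0:ℝ)..(2*π), pY u (x, y)) = 0 := by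
  set a : ℝ := ∫ x in (0:ℝ)..(2*π), pY u (x, 1) with hadef
  have hconst : ∀ y : ℝ, 0 < y → (∫ x in (0:ℝ)..(2*π), pY u (x, y)) = a := by
    intro y hy
    rcases le_total y 1 with h | h
    · exact (g_const hC2 hper hharm hy h).symm
    · exact g_const hC2 hper hharm one_pos h
  suffices ha : a = 0 by
    intro y hy; rw [hconst y hy, ha]
  by_contra ha
  have hc : 0 < a^2/(2*π) := by
    have h2 : 0 < a^2 := by positivity
    positivity
  set Q : Set (ℝ × ℝ) := Set.Ioo (0:ℝ) (2*π) ×ˢ Set.Ioi (0:ℝ) with hQ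
  have hQmeas : MeasurableSet Q := measurableSet_Ioo.prod measurableSet_Ioi
  have hQS : Q ⊆ S := fun p hp => hp.2
  -- upper bound: finiteness
  have hfin : (∫⁻ p in Q, ENNReal.ofReal ((pY u p)^2)) < ⊤ := by
    have h1 := henergy.2
    rw [hasFiniteIntegral_iff_norm] at h1
    refine lt_of_le_of_lt (lintegral_mono fun p => ?_) h1
    have : (pY u p)^2 ≤ pX u p ^ 2 + pY u p ^ 2 := by nlinarith [sq_nonneg (pX u p)]
    calc ENNReal.ofReal ((pY u p)^2) ≤ ENNReal.ofReal (pX u p ^ 2 + pY u p ^ 2) :=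
        ENNReal.ofReal_le_ofReal this
      _ ≤ ENNReal.ofReal ‖pX u p ^ 2 + pY u p ^ 2‖ :=
        ENNReal.ofReal_le_ofReal (le_abs_self _)
  -- measurability
  have haem0 : AEMeasurable (pY u) (volume.restrict Q) :=
    ((contOn_pY hC2).mono hQS).aemeasurable hQmeas
  have haem : AEMeasurable (fun p : ℝ × ℝ => ENNReal.ofReal ((pY u p)^2))
      (volume.restrict Q) := by
    have h2 : (fun p : ℝ × ℝ => ENNReal.ofReal ((pY u p)^2))
        = fun p => ENNReal.ofReal (pY u p * pY u p) := by
      funext p; rw [sq]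
    rw [h2]
    exact ENNReal.measurable_ofReal.comp_aemeasurable (haem0.mul haem0)
  -- lower bound via Tonelli
  have hprodmeas : volume.restrict Q
      = (volume.restrict (Set.Ioo (0:ℝ) (2*π))).prod (volume.restrict (Set.Ioi (0:ℝ))) := by
    rw [Measure.prod_restrict, ← Measure.volume_eq_prod]
  have htonelli : (∫⁻ p in Q, ENNReal.ofReal ((pY u p)^2))
      = ∫⁻ y in Set.Ioi (0:ℝ), ∫⁻ x in Set.Ioo (0:ℝ) (2*π),
          ENNReal.ofReal ((pY u (x, y))^2) := by
    rw [hprodmeas] at haem ⊢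
    exact lintegral_prod_symm _ haem
  have hlower : (⊤ : ENNReal) ≤ ∫⁻ p in Q, ENNReal.ofReal ((pY u p)^2) := by
    rw [htonelli]
    have hstep : ∀ y ∈ Set.Ioi (0:ℝ),
        ENNReal.ofReal (a^2/(2*π)) ≤ ∫⁻ x in Set.Ioo (0:ℝ) (2*π),
          ENNReal.ofReal ((pY u (x, y))^2) := fun y hy =>
      slice_lower hC2 hy (hconst y hy).symm
    calc (⊤ : ENNReal) = ENNReal.ofReal (a^2/(2*π)) * volume (Set.Ioi (0:ℝ)) := by
          rw [Real.volume_Ioi, ENNReal.mul_top (ne_of_gt (ENNReal.ofReal_pos.mpr hc))]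
      _ = ∫⁻ _ in Set.Ioi (0:ℝ), ENNReal.ofReal (a^2/(2*π)) :=
          (setLIntegral_const _ _).symm
      _ ≤ _ := setLIntegral_mono' measurableSet_Ioi hstep
  exact absurd (lt_of_le_of_lt hlower hfin) (lt_irrefl _)

end stage5

section stage6

lemma zero_of_integral_zero {f : ℝ → ℝ} (hf : Continuous f) (h0 : ∀ x, 0 ≤ f x)
    {s t : ℝ} (hst : s ≤ t) (hI : (∫ x in s..t, f x) = 0) : ∀ x ∈ Set.Ioo s t, f x = 0 := by
  have hint : IntegrableOn f (Set.Ioc s t) :=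
    (hf.continuousOn.integrableOn_compact isCompact_Icc).mono_set Set.Ioc_subset_Icc_self
  rw [intervalIntegral.integral_of_le hst] at hI
  have hae : f =ᵐ[volume.restrict (Set.Ioc s t)] 0 :=
    (integral_eq_zero_iff_of_nonneg (fun x => h0 x) hint).mp hI
  have hopen : IsOpen {z : ℝ | f z ≠ 0} := (isOpen_compl_singleton).preimage hf
  have hnull : volume ({z : ℝ | f z ≠ 0} ∩ Set.Ioc s t) = 0 := by
    have h1 : (volume.restrict (Set.Ioc s t)) {z : ℝ | f z ≠ 0} = 0 := hae
    rwa [Measure.restrict_apply hopen.measurableSet] at h1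
  intro x hx
  by_contra hne
  have hO : IsOpen ({z : ℝ | f z ≠ 0} ∩ Set.Ioo s t) := hopen.inter isOpen_Ioo
  have hpos : 0 < volume ({z : ℝ | f z ≠ 0} ∩ Set.Ioo s t) :=
    hO.measure_pos volume ⟨x, hne, hx⟩
  have : volume ({z : ℝ | f z ≠ 0} ∩ Set.Ioo s t) = 0 :=
    measure_mono_null (Set.inter_subset_inter_right _ Set.Ioo_subset_Ioc_self) hnull
  rw [this] at hpos
  exact lt_irrefl _ hpos

end stage6

section stage7
variable {u : ℝ × ℝ → ℝ}

lemma cont_u_slice (hcont : ContinuousOn u {p : ℝ × ℝ | 0 ≤ p.2}) {y : ℝ} (hy : 0 ≤ y) :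
    Continuous fun x => u (x, y) := by
  rw [← continuousOn_univ]
  apply hcont.comp ((continuous_id.prodMk continuous_const).continuousOn)
  intro x _
  exact show (0:ℝ) ≤ y from hy

theorem statement2' (u : ℝ × ℝ → ℝ)
    (hcont : ContinuousOn u {p : ℝ × ℝ | 0 ≤ p.2})
    (hper : ∀ x y : ℝ, u (x + 2 * π, y) = u (x, y))
    (hnonneg : ∀ p : ℝ × ℝ, 0 ≤ p.2 → 0 ≤ u p)
    (hC2 : ContDiffOn ℝ 2 u {p : ℝ × ℝ | 0 < p.2})
    (hharm : ∀ p : ℝ × ℝ, 0 < p.2 → pXX u p + pYY u p = 0)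
    (hbdry : ∀ x : ℝ, u (x, 0) = 0)
    (henergy : IntegrableOn (fun p => pX u p ^ 2 + pY u p ^ 2)
      (Set.Ioo (0 : ℝ) (2 * π) ×ˢ Set.Ioi (0 : ℝ)))
    (p : ℝ × ℝ) (hp : 0 ≤ p.2) : u p = 0 := by
  obtain ⟨x₀, y₀⟩ := p
  simp only at hp
  rcases eq_or_lt_of_le hp with h0 | h0
  · rw [← h0]; exact hbdry x₀
  -- y₀ > 0 case
  set m : ℝ → ℝ := fun y => ∫ x in (0:ℝ)..(2*π), u (x, y) with hm
  have hgz := g_zero hC2 hper hharm henergy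
  have hmconst : ∀ {y₁ y₂ : ℝ}, 0 < y₁ → y₁ ≤ y₂ → m y₂ = m y₁ := by
    intro y₁ y₂ h1 h12
    have hd := m_diff hC2 h1 h12
    have hz : (∫ y in y₁..y₂, ∫ x in (0:ℝ)..(2*π), pY u (x, y)) = ∫ _y in y₁..y₂, (0:ℝ) := by
      apply intervalIntegral.integral_congr
      intro y hy
      rw [Set.uIcc_of_le h12] at hy
      exact hgz y (lt_of_lt_of_le h1 hy.1)
    rw [hz, intervalIntegral.integral_zero] at hd
    have : m y₂ - m y₁ = 0 := hd
    linarith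
  have hmconst' : ∀ y : ℝ, 0 < y → m y = m 1 := by
    intro y hy
    rcases le_total y 1 with h | h
    · exact (hmconst hy h).symm
    · exact hmconst one_pos h
  -- the limit at the boundary
  have hm1 : m 1 = 0 := by
    have hcpt : IsCompact (Set.Icc (0:ℝ) (2*π) ×ˢ Set.Icc (0:ℝ) 1) :=
      isCompact_Icc.prod isCompact_Icc
    obtain ⟨M, hM⟩ := hcpt.exists_bound_of_continuousOn
      (hcont.mono (by rintro ⟨x, y⟩ ⟨-, hy⟩; exact hy.1))
    have hl : Filter.Tendsto m (nhdsWithin (0:ℝ) (Set.Ioi 0)) (nhds 0) := by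
      have h00 : (∫ _x in (0:ℝ)..(2*π), (0:ℝ)) = 0 := intervalIntegral.integral_zero
      have hl0 : Filter.Tendsto m (nhdsWithin (0:ℝ) (Set.Ioi 0))
          (nhds (∫ _x in (0:ℝ)..(2*π), (0:ℝ))) := by
        apply intervalIntegral.tendsto_integral_filter_of_dominated_convergence (fun _ => M)
        · filter_upwards [self_mem_nhdsWithin] with y hy
          exact ((cont_u_slice hcont (le_of_lt hy)).aestronglyMeasurable).restrict
        · filter_upwards [Ioc_mem_nhdsGT_of_mem (Set.left_mem_Ico.mpr one_pos)] with y hy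
          apply ae_of_all
          intro x hx
          rw [Set.uIoc_of_le (by positivity)] at hx
          exact hM (x, y) ⟨Set.Ioc_subset_Icc_self hx, ⟨le_of_lt hy.1, hy.2⟩⟩
        · exact intervalIntegrable_const
        · apply ae_of_all
          intro x _
          have hcw : ContinuousWithinAt u {p : ℝ × ℝ | 0 ≤ p.2} (x, 0) :=
            hcont _ (le_refl (0:ℝ))
          have hpath : Filter.Tendsto (fun y : ℝ => ((x, y) : ℝ × ℝ))
              (nhdsWithin (0:ℝ) (Set.Ioi 0)) (nhdsWithin (x, 0) {p : ℝ × ℝ | 0 ≤ p.2}) := by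
            apply tendsto_nhdsWithin_of_tendsto_nhds_of_eventually_within
            · exact ((continuous_const.prodMk continuous_id).tendsto 0).mono_left
                nhdsWithin_le_nhds
            · filter_upwards [self_mem_nhdsWithin] with y hy
              exact show (0:ℝ) ≤ y from le_of_lt hy
          have ht := hcw.tendsto.comp hpath
          rw [hbdry x] at ht
          exact ht
      rw [h00] at hl0
      exact hl0
    have hconst_ev : m =ᶠ[nhdsWithin (0:ℝ) (Set.Ioi 0)] fun _ => m 1 := by
      filter_upwards [self_mem_nhdsWithin] with y hy
      exact hmconst' y hy
    have htc : Filter.Tendsto (fun _ : ℝ => m 1) (nhdsWithin (0:ℝ) (Set.Ioi 0)) (nhds 0) :=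
      hl.congr' hconst_ev
    exact (tendsto_nhds_unique htc tendsto_const_nhds).symm
  have hmy : m y₀ = 0 := by rw [hmconst' y₀ h0, hm1]
  have hfc : Continuous fun x => u (x, y₀) := cont_u_slice hcont (le_of_lt h0)
  have hf0 : ∀ x, 0 ≤ u (x, y₀) := fun x => hnonneg (x, y₀) (le_of_lt h0)
  have h2π : (1:ℝ) < 2*π := by nlinarith [pi_gt_three]
  have hzero1 : ∀ x ∈ Set.Ioo (0:ℝ) (2*π), u (x, y₀) = 0 :=
    zero_of_integral_zero hfc hf0 (by positivity) hmy
  have hperiod : Function.Periodic (fun x => u (x, y₀)) (2*π) := fun x => hper x y₀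
  have hshift : (∫ x in (1:ℝ)..(1+2*π), u (x, y₀)) = 0 := by
    rw [hperiod.intervalIntegral_add_eq 1 0]
    have : (0:ℝ) + 2*π = 2*π := by ring
    rw [this]
    exact hmy
  have hzero2 : ∀ x ∈ Set.Ioo (1:ℝ) (1+2*π), u (x, y₀) = 0 :=
    zero_of_integral_zero hfc hf0 (by nlinarith [pi_gt_three]) hshift
  obtain ⟨x', hx', hEq⟩ := hperiod.exists_mem_Ico (by positivity) x₀ 1
  show u (x₀, y₀) = 0
  rw [show u (x₀, y₀) = u (x', y₀) from hEq]
  rcases eq_or_lt_of_le hx'.1 with h1 | h1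
  · exact h1 ▸ hzero1 1 ⟨one_pos, h2π⟩
  · exact hzero2 x' ⟨h1, hx'.2⟩

end stage7

/-- A nonnegative harmonic function of finite energy on the half-cylinder,
vanishing on the boundary circle, is identically zero. -/
theorem statement2 (u : ℝ × ℝ → ℝ)
    (hcont : ContinuousOn u {p : ℝ × ℝ | 0 ≤ p.2})
    (hper : ∀ x y : ℝ, u (x + 2 * π, y) = u (x, y))
    (hnonneg : ∀ p : ℝ × ℝ, 0 ≤ p.2 → 0 ≤ u p)
    (hC2 : ContDiffOn ℝ 2 u {p : ℝ × ℝ | 0 < p.2})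
    (hharm : ∀ p : ℝ × ℝ, 0 < p.2 → pXX u p + pYY u p = 0)
    (hbdry : ∀ x : ℝ, u (x, 0) = 0)
    (henergy : IntegrableOn (fun p => pX u p ^ 2 + pY u p ^ 2)
      (Set.Ioo (0 : ℝ) (2 * π) ×ˢ Set.Ioi (0 : ℝ)))
    (p : ℝ × ℝ) (hp : 0 ≤ p.2) : u p = 0 :=
  statement2' u hcont hper hnonneg hC2 hharm hbdry henergy p hp
end

section
/- Let N be a nilpotent real r×r matrix and Y a real diagonal r×r matrix with [N,Y] = 2N, and define H(x,y) = exp(x·Nᵀ)·exp((log y)·Y)·exp(x·N) for x ∈ ℝ, y > 0. Then for all x ∈ ℝ and y > 0, y²·[ tr((H⁻¹·∂H/∂x)²) + tr((H⁻¹·∂H/∂y)²) ] = 2·tr(Nᵀ·N) + tr(Y²). In particular, the energy density of the local model map, measured with the hyperbolic metric on the domain and the invariant metric on positive definite symmetric matrices, is constant. -/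
open Matrix

/-- The local model metric `H(x,y) = exp(x Nᵀ) exp((log y) Y) exp(x N)`. -/
noncomputable def Hmod {r : ℕ} (N Y : Matrix (Fin r) (Fin r) ℝ) (x y : ℝ) :
    Matrix (Fin r) (Fin r) ℝ :=
  NormedSpace.exp (x • Nᵀ) * NormedSpace.exp (Real.log y • Y) * NormedSpace.exp (x • N)

/-- Partial derivative of the local model metric in `x`, entrywise. -/
noncomputable def HmodX {r : ℕ} (N Y : Matrix (Fin r) (Fin r) ℝ) (x y : ℝ) :
    Matrix (Fin r) (Fin r) ℝ :=
  Matrix.of fun a b => deriv (fun t => Hmod N Y t y a b) x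

/-- Partial derivative of the local model metric in `y`, entrywise. -/
noncomputable def HmodY {r : ℕ} (N Y : Matrix (Fin r) (Fin r) ℝ) (x y : ℝ) :
    Matrix (Fin r) (Fin r) ℝ :=
  Matrix.of fun a b => deriv (fun t => Hmod N Y x t a b) y

section Aux

open NormedSpace

attribute [local instance] Matrix.linftyOpNormedAddCommGroup Matrix.linftyOpNormedRing
  Matrix.linftyOpNormedAlgebra

variable {r : ℕ}

private lemma exp_neg_mul_exp' (A : Matrix (Fin r) (Fin r) ℝ) :
    exp (-A) * exp A = 1 := by
  rw [← Matrix.exp_add_of_commute (-A) A ((Commute.refl A).neg_left),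
    neg_add_cancel, exp_zero]

private lemma exp_mul_exp_neg' (A : Matrix (Fin r) (Fin r) ℝ) :
    exp A * exp (-A) = 1 := by
  rw [← Matrix.exp_add_of_commute A (-A) ((Commute.refl A).neg_right),
    add_neg_cancel, exp_zero]

private lemma semiconj_exp' (a b c : Matrix (Fin r) (Fin r) ℝ) (h : a * b = c * a) :
    a * exp b = exp c * a := by
  have hpow : ∀ n : ℕ, a * b ^ n = c ^ n * a := by
    intro n
    induction n with
    | zero => simp
    | succ n ih => rw [pow_succ', ← mul_assoc, h, mul_assoc, ih, ← mul_assoc, ← pow_succ']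
  simp only [exp_eq_tsum ℝ]
  erw [← (expSeries_summable' (𝕂 := ℝ) b).tsum_mul_left a,
    ← (expSeries_summable' (𝕂 := ℝ) c).tsum_mul_right a]
  congr 1
  funext n
  rw [mul_smul_comm, smul_mul_assoc, hpow n]

/-- Semiconjugation of `exp (L • Z)` by a matrix `M` with `M * Z = Z * M + c • M`. -/
private lemma conj_exp_smul (M Z : Matrix (Fin r) (Fin r) ℝ) (c L : ℝ)
    (h : M * Z = Z * M + c • M) :
    M * exp (L • Z) = Real.exp (c * L) • (exp (L • Z) * M) := by
  have hb : M * (L • Z) = (L • Z + (c * L) • (1 : Matrix (Fin r) (Fin r) ℝ)) * M := by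
    rw [mul_smul_comm, h, add_mul, smul_mul_assoc, smul_mul_assoc, one_mul, smul_add,
      smul_smul, mul_comm L c]
  rw [semiconj_exp' M (L • Z) _ hb]
  rw [Matrix.exp_add_of_commute _ _ ((Commute.one_right (L • Z)).smul_right (c * L))]
  have h1 : ((c * L) • (1 : Matrix (Fin r) (Fin r) ℝ)) = algebraMap ℝ _ (c * L) :=
    (Algebra.algebraMap_eq_smul_one _).symm
  erw [h1, ← algebraMap_exp_comm]
  rw [← Real.exp_eq_exp_ℝ, Algebra.algebraMap_eq_smul_one,
    mul_smul_comm, mul_one, smul_mul_assoc]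

private lemma hasDerivAt_entry {f : ℝ → Matrix (Fin r) (Fin r) ℝ}
    {f' : Matrix (Fin r) (Fin r) ℝ} {x : ℝ} (h : HasDerivAt f f' x) (a b : Fin r) :
    HasDerivAt (fun t => f t a b) (f' a b) x := by
  let L : Matrix (Fin r) (Fin r) ℝ →L[ℝ] ℝ :=
    LinearMap.toContinuousLinearMap
      { toFun := fun M => M a b, map_add' := fun _ _ => rfl, map_smul' := fun _ _ => rfl }
  exact L.hasFDerivAt.comp_hasDerivAt x h

private lemma hmodX_eq (N Y : Matrix (Fin r) (Fin r) ℝ) (x y : ℝ) :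
    HmodX N Y x y = Nᵀ * Hmod N Y x y + Hmod N Y x y * N := by
  have h1 : HasDerivAt (fun t : ℝ => exp (t • Nᵀ)) (Nᵀ * exp (x • Nᵀ)) x :=
    hasDerivAt_exp_smul_const' _ _
  have h2 : HasDerivAt (fun t : ℝ => exp (t • N)) (exp (x • N) * N) x :=
    hasDerivAt_exp_smul_const _ _
  have h3 : HasDerivAt (fun t => Hmod N Y t y)
      (Nᵀ * Hmod N Y x y + Hmod N Y x y * N) x := by
    have h := (h1.mul_const (exp (Real.log y • Y))).mul h2
    simp only [Hmod]
    refine h.congr_deriv ?_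
    simp [mul_assoc]
  refine Matrix.ext fun a b => ?_
  simpa [HmodX] using (hasDerivAt_entry h3 a b).deriv

private lemma hmodY_eq (N Y : Matrix (Fin r) (Fin r) ℝ) (x y : ℝ) (hy : 0 < y) :
    HmodY N Y x y
      = y⁻¹ • (exp (x • Nᵀ) * (exp (Real.log y • Y) * Y) * exp (x • N)) := by
  have hlog : HasDerivAt Real.log y⁻¹ y := Real.hasDerivAt_log (ne_of_gt hy)
  have hg : HasDerivAt (fun s : ℝ => exp (s • Y))
      (exp (Real.log y • Y) * Y) (Real.log y) := hasDerivAt_exp_smul_const _ _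
  have hcomp : HasDerivAt (fun t : ℝ => exp (Real.log t • Y))
      (y⁻¹ • (exp (Real.log y • Y) * Y)) y := hg.scomp y hlog
  have h3 : HasDerivAt (fun t => Hmod N Y x t)
      (y⁻¹ • (exp (x • Nᵀ) * (exp (Real.log y • Y) * Y) * exp (x • N))) y := by
    have h := (hcomp.const_mul (exp (x • Nᵀ))).mul_const (exp (x • N))
    simp only [Hmod]
    refine h.congr_deriv ?_
    rw [mul_smul_comm, smul_mul_assoc]
  refine Matrix.ext fun a b => ?_
  simpa [HmodY] using (hasDerivAt_entry h3 a b).deriv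

end Aux

/-- The hyperbolic energy density of the local model map is the constant
`2 tr(Nᵀ N) + tr(Y²)`. -/
theorem statement6 {r : ℕ} (N Y : Matrix (Fin r) (Fin r) ℝ)
    (hN : IsNilpotent N) (hY : Y.IsDiag)
    (hbr : N * Y - Y * N = (2 : ℝ) • N) :
    ∀ x y : ℝ, 0 < y →
      y ^ 2 * ((((Hmod N Y x y)⁻¹ * HmodX N Y x y) ^ 2).trace
          + (((Hmod N Y x y)⁻¹ * HmodY N Y x y) ^ 2).trace)
        = 2 * (Nᵀ * N).trace + (Y ^ 2).trace := by
  intro x y hy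
  have hy0 : y ≠ 0 := ne_of_gt hy
  set E := NormedSpace.exp (x • Nᵀ) with hE
  set C := NormedSpace.exp (Real.log y • Y) with hC
  set F := NormedSpace.exp (x • N) with hF
  set Ei := NormedSpace.exp (-(x • Nᵀ)) with hEi
  set Ci := NormedSpace.exp (-(Real.log y • Y)) with hCi
  set Fi := NormedSpace.exp (-(x • N)) with hFi
  have hH : Hmod N Y x y = E * C * F := rfl
  have hEEi : E * Ei = 1 := exp_mul_exp_neg' _
  have hEiE : Ei * E = 1 := exp_neg_mul_exp' _
  have hCCi : C * Ci = 1 := exp_mul_exp_neg' _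
  have hCiC : Ci * C = 1 := exp_neg_mul_exp' _
  have hFFi : F * Fi = 1 := exp_mul_exp_neg' _
  have hFiF : Fi * F = 1 := exp_neg_mul_exp' _
  -- commutation facts
  have hFN : F * N = N * F := (((Commute.refl N).smul_left x).exp_left).eq
  have hFiN : Fi * N = N * Fi :=
    ((((Commute.refl N).smul_left x).neg_left).exp_left).eq
  have hEiNt : Ei * Nᵀ = Nᵀ * Ei :=
    ((((Commute.refl Nᵀ).smul_left x).neg_left).exp_left).eq
  -- bracket relations
  have hbrN : N * Y = Y * N + (2 : ℝ) • N := by rw [← hbr]; abel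
  have hYT : Yᵀ = Y := by
    ext i j
    by_cases h : i = j
    · subst h; rfl
    · rw [Matrix.transpose_apply, hY h, hY (Ne.symm h)]
  have hbrT : Nᵀ * Y = Y * Nᵀ + (-2 : ℝ) • Nᵀ := by
    have h := congrArg Matrix.transpose hbr
    simp only [Matrix.transpose_sub, Matrix.transpose_mul, Matrix.transpose_smul, hYT] at h
    have h' : Nᵀ * Y = Y * Nᵀ - (2 : ℝ) • Nᵀ := by rw [← h]; abel
    rw [h', neg_smul, sub_eq_add_neg]
  have hexp2 : Real.exp (2 * Real.log y) = y ^ 2 := by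
    rw [two_mul, Real.exp_add, Real.exp_log hy, sq]
  have hNtC : Nᵀ * C = (y ^ 2)⁻¹ • (C * Nᵀ) := by
    have h := conj_exp_smul Nᵀ Y (-2) (Real.log y) hbrT
    rw [neg_mul, Real.exp_neg, hexp2] at h
    exact h
  -- the inverse
  have hHinv : (Hmod N Y x y)⁻¹ = Fi * Ci * Ei := by
    apply Matrix.inv_eq_right_inv
    rw [hH]
    simp only [mul_assoc]
    rw [← mul_assoc F Fi, hFFi, one_mul, ← mul_assoc C Ci, hCCi, one_mul, hEEi]
  -- closed form for H⁻¹ * ∂ₓH : conjugation of (y²)⁻¹ • Nᵀ + N by exp (x N)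
  have hPX : (Hmod N Y x y)⁻¹ * HmodX N Y x y = Fi * ((y ^ 2)⁻¹ • Nᵀ + N) * F := by
    rw [hHinv, hmodX_eq, hH, mul_add]
    have hsnd : Fi * Ci * Ei * (E * C * F * N) = N := by
      simp only [mul_assoc]
      rw [← mul_assoc Ei E, hEiE, one_mul, ← mul_assoc Ci C, hCiC, one_mul,
        ← mul_assoc Fi F, hFiF, one_mul]
    have hfst : Fi * Ci * Ei * (Nᵀ * (E * C * F)) = (y ^ 2)⁻¹ • (Fi * (Nᵀ * F)) := by
      simp only [mul_assoc]
      rw [← mul_assoc Ei Nᵀ, hEiNt, mul_assoc Nᵀ Ei, ← mul_assoc Ei E, hEiE, one_mul,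
        ← mul_assoc Nᵀ C, hNtC, smul_mul_assoc, mul_assoc C Nᵀ F, mul_smul_comm,
        mul_smul_comm, ← mul_assoc Ci C, hCiC, one_mul]
    have hRHS : Fi * ((y ^ 2)⁻¹ • Nᵀ + N) * F = (y ^ 2)⁻¹ • (Fi * (Nᵀ * F)) + N := by
      rw [mul_add, add_mul, mul_smul_comm, smul_mul_assoc, mul_assoc Fi Nᵀ F, hFiN,
        mul_assoc N Fi F, hFiF, mul_one]
    rw [hsnd, hfst, hRHS]
  -- closed form for H⁻¹ * ∂ᵧH : conjugation of y⁻¹ • Y by exp (x N)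
  have hPY : (Hmod N Y x y)⁻¹ * HmodY N Y x y = Fi * (y⁻¹ • Y) * F := by
    rw [hHinv, hmodY_eq N Y x y hy, ← hE, ← hC, ← hF]
    have hRHS : Fi * (y⁻¹ • Y) * F = y⁻¹ • (Fi * (Y * F)) := by
      rw [mul_smul_comm, smul_mul_assoc, mul_assoc]
    rw [hRHS, mul_smul_comm]
    congr 1
    simp only [mul_assoc]
    rw [← mul_assoc Ei E, hEiE, one_mul, ← mul_assoc Ci C, hCiC, one_mul]
  -- traces are invariant under conjugation by exp (x N)
  have tconj : ∀ M : Matrix (Fin r) (Fin r) ℝ, (Fi * M * F).trace = M.trace := by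
    intro M
    rw [Matrix.trace_mul_comm, ← Matrix.mul_assoc, hFFi, Matrix.one_mul]
  have tsq : ∀ M : Matrix (Fin r) (Fin r) ℝ, ((Fi * M * F) ^ 2).trace = (M ^ 2).trace := by
    intro M
    have h : (Fi * M * F) ^ 2 = Fi * M ^ 2 * F := by
      simp only [sq, mul_assoc]
      rw [← mul_assoc F Fi, hFFi, one_mul]
    rw [h, tconj]
  rw [hPX, hPY, tsq, tsq]
  -- nilpotency kills the trace of N²
  have hNN : (N * N).trace = 0 := by
    obtain ⟨k, hk⟩ := hN
    have hnil : IsNilpotent (N * N) := ⟨k, by rw [← sq, ← pow_mul, mul_comm 2 k, pow_mul, hk]; simp⟩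
    exact (Matrix.isNilpotent_trace_of_isNilpotent hnil).eq_zero
  have hNtNt : (Nᵀ * Nᵀ).trace = 0 := by
    rw [← Matrix.transpose_mul, Matrix.trace_transpose, hNN]
  have hNNt : (N * Nᵀ).trace = (Nᵀ * N).trace := Matrix.trace_mul_comm _ _
  have e1 : (((y ^ 2)⁻¹ • Nᵀ + N) ^ 2).trace
      = (y ^ 2)⁻¹ * ((y ^ 2)⁻¹ * (Nᵀ * Nᵀ).trace) + (y ^ 2)⁻¹ * (Nᵀ * N).trace
        + (y ^ 2)⁻¹ * (N * Nᵀ).trace + (N * N).trace := by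
    simp only [sq, add_mul, mul_add, smul_mul_assoc, mul_smul_comm, smul_smul,
      Matrix.trace_add, Matrix.trace_smul, smul_eq_mul]
    ring
  have e2 : ((y⁻¹ • Y) ^ 2).trace = y⁻¹ * y⁻¹ * (Y ^ 2).trace := by
    simp only [smul_pow, Matrix.trace_smul, smul_eq_mul]
    ring
  rw [e1, e2, hNN, hNtNt, hNNt]
  field_simp
  ring
end
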